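/- arXiv:0911.3524 — 10 statements merged into one kernel-verified Lean document; each statement's English description precedes it below -/
import Mathlib

section
/- Let A be a symmetric cellular algebra with cellular basis C and dual basis D. For any λ ∈ Λ and S, T, P, Q ∈ M(λ), the product C^λ_{S,T} D^λ_{T,Q} equals C^λ_{S,P} D^λ_{P,Q}; that is, C^λ_{S,T} D^λ_{T,Q} is independent of the middle index. -/
/-- Lemma 2.14(3): `C l S T * D l T Q` is independent of the middle index `T`. -/
theorem cellular_mul_dual_middle_independent
    {R A : Type*} [CommRing R] [Ring A] [Algebra R A]
    {Λ : Type*} [PartialOrder Λ] [Fintype Λ] [DecidableEq Λ]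
    {M : Λ → Type*} [∀ l, Fintype (M l)] [∀ l, DecidableEq (M l)]
    (C D : ∀ l, M l → M l → A)
    (bC : Module.Basis ((l : Λ) × (M l × M l)) R A)
    (hbC : ∀ l S T, bC ⟨l, (S, T)⟩ = C l S T)
    (ι : A →ₗ[R] A)
    (hι2 : ∀ x, ι (ι x) = x)
    (hιmul : ∀ x y, ι (x * y) = ι y * ι x)
    (hC2 : ∀ l (S T : M l), ι (C l S T) - C l T S ∈
      Submodule.span R {x | ∃ m, ∃ U V : M m, m < l ∧ x = C m U V})
    (r : A → ∀ l, M l → M l → R)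
    (hC3 : ∀ (a : A) l (S T : M l), a * C l S T - ∑ S', r a l S' S • C l S' T ∈
      Submodule.span R {x | ∃ m, ∃ U V : M m, m < l ∧ x = C m U V})
    (τ : A →ₗ[R] R)
    (hτtr : ∀ x y, τ (x * y) = τ (y * x))
    (bD : Module.Basis ((l : Λ) × (M l × M l)) R A)
    (hbD : ∀ l S T, bD ⟨l, (S, T)⟩ = D l S T)
    (hdual : ∀ l m (S T : M l) (U V : M m),
      τ (C l S T * D m U V) =
        if (⟨l, (S, T)⟩ : (l : Λ) × (M l × M l)) = ⟨m, (V, U)⟩ then 1 else 0)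
     :
    ∀ l (S T P Q : M l), C l S T * D l T Q = C l S P * D l P Q := by

  intro l S T P Q
  have hlow : ∀ (T' Q' : M l) (x : A),
      x ∈ Submodule.span R {x | ∃ m, ∃ U V : M m, m < l ∧ x = C m U V} →
      τ (x * D l T' Q') = 0 := by
    intro T' Q' x hx
    induction hx using Submodule.span_induction with
    | mem x hx =>
        obtain ⟨m, U, V, hml, rfl⟩ := hx
        rw [hdual, if_neg]
        intro h
        exact absurd (congrArg Sigma.fst h) (ne_of_lt hml)
    | zero => simp
    | add x y _ _ hx hy => rw [add_mul, map_add, hx, hy, add_zero]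
    | smul c x _ hx => rw [smul_mul_assoc, map_smul, hx, smul_zero]
  have hswap : ∀ (n m : Λ) (X Y : M n) (U V : M m),
      ((⟨n, (X, Y)⟩ : (l : Λ) × (M l × M l)) = ⟨m, (U, V)⟩) →
      ((⟨m, (V, U)⟩ : (l : Λ) × (M l × M l)) = ⟨n, (Y, X)⟩) := by
    intro n m X Y U V h
    obtain ⟨h1, h2⟩ := Sigma.mk.inj_iff.mp h
    subst h1
    obtain ⟨rfl, rfl⟩ := Prod.mk.injEq _ _ _ _ |>.mp (eq_of_heq h2)
    rfl
  have hrepr : ∀ (a : A) m (U V : M m), bD.repr a ⟨m, (U, V)⟩ = τ (C m V U * a) := by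
    intro a m U V
    have hext : (Finsupp.lapply (⟨m, (U, V)⟩ : (l : Λ) × (M l × M l))).comp
        (bD.repr : A →ₗ[R] _) = τ.comp (LinearMap.mulLeft R (C m V U)) := by
      apply bD.ext
      rintro ⟨n, X, Y⟩
      simp only [LinearMap.comp_apply, LinearMap.mulLeft_apply, Finsupp.lapply_apply, LinearEquiv.coe_coe]
      rw [Module.Basis.repr_self_apply]
      rw [hbD, hdual]
      congr 1
      apply propext
      constructor
      · intro h; exact hswap _ _ _ _ _ _ h
      · intro h; exact hswap _ _ _ _ _ _ h
    have := congrArg (fun f => f a) hext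
    simpa using this
  have key : ∀ (b : A) (T' : M l), τ (b * (C l S T' * D l T' Q)) = r b l Q S := by
    intro b T'
    rw [← mul_assoc]
    have h2 := hlow T' Q _ (hC3 b l S T')
    have e : (b * C l S T') * D l T' Q =
        (∑ S', r b l S' S • C l S' T') * D l T' Q +
        (b * C l S T' - ∑ S', r b l S' S • C l S' T') * D l T' Q := by
      rw [← add_mul]
      congr 1
      abel
    rw [e, map_add, h2, add_zero, Finset.sum_mul, map_sum]
    simp only [smul_mul_assoc, map_smul, hdual, Sigma.mk.inj_iff, heq_eq_eq,
      Prod.mk.injEq, true_and, and_true, smul_eq_mul, mul_ite, mul_one, mul_zero]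
    simp
  apply bD.repr.injective
  ext ⟨m, U, V⟩
  rw [hrepr, hrepr, key, key]
end

section
/- Let A be a symmetric cellular algebra with cellular basis C and dual basis D. For λ ∈ Λ and S, T, P, Q ∈ M(λ) with T ≠ P, one has C^λ_{S,T} D^λ_{P,Q} = 0. -/
/-- Lemma 2.14(5): if `T ≠ P` then `C l S T * D l P Q = 0`. -/
theorem cellular_mul_dual_vanish
    {R A : Type*} [CommRing R] [Ring A] [Algebra R A]
    {Λ : Type*} [PartialOrder Λ] [Fintype Λ] [DecidableEq Λ]
    {M : Λ → Type*} [∀ l, Fintype (M l)] [∀ l, DecidableEq (M l)]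
    (C D : ∀ l, M l → M l → A)
    (bC : Module.Basis ((l : Λ) × (M l × M l)) R A)
    (hbC : ∀ l S T, bC ⟨l, (S, T)⟩ = C l S T)
    (ι : A →ₗ[R] A)
    (hι2 : ∀ x, ι (ι x) = x)
    (hιmul : ∀ x y, ι (x * y) = ι y * ι x)
    (hC2 : ∀ l (S T : M l), ι (C l S T) - C l T S ∈
      Submodule.span R {x | ∃ m, ∃ U V : M m, m < l ∧ x = C m U V})
    (r : A → ∀ l, M l → M l → R)
    (hC3 : ∀ (a : A) l (S T : M l), a * C l S T - ∑ S', r a l S' S • C l S' T ∈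
      Submodule.span R {x | ∃ m, ∃ U V : M m, m < l ∧ x = C m U V})
    (τ : A →ₗ[R] R)
    (hτtr : ∀ x y, τ (x * y) = τ (y * x))
    (bD : Module.Basis ((l : Λ) × (M l × M l)) R A)
    (hbD : ∀ l S T, bD ⟨l, (S, T)⟩ = D l S T)
    (hdual : ∀ l m (S T : M l) (U V : M m),
      τ (C l S T * D m U V) =
        if (⟨l, (S, T)⟩ : (l : Λ) × (M l × M l)) = ⟨m, (V, U)⟩ then 1 else 0)
     :
    ∀ l (S T P Q : M l), T ≠ P → C l S T * D l P Q = 0 := by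
  intro l S T P Q hTP
  have key : ∀ (x : A) (m : Λ) (U V : M m),
      τ (C m V U * x) = bD.repr x ⟨m, (U, V)⟩ := by
    intro x m U V
    conv_lhs => rw [← bD.linearCombination_repr x]
    rw [Finsupp.linearCombination_apply,
      Finsupp.sum_fintype _ _ (fun i => zero_smul R (bD i)),
      Finset.mul_sum, map_sum,
      Finset.sum_eq_single (⟨m, (U, V)⟩ : (l : Λ) × (M l × M l))]
    · rw [hbD, mul_smul_comm, map_smul, hdual]
      simp
    · rintro ⟨n, X, Y⟩ _ hne
      rw [hbD, mul_smul_comm, map_smul, hdual, if_neg, smul_zero]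
      rintro h
      apply hne
      obtain ⟨rfl, h2⟩ := Sigma.mk.inj_iff.mp h
      obtain ⟨rfl, rfl⟩ := Prod.mk_inj.mp (eq_of_heq h2)
      rfl
    · simp
  apply bD.repr.injective
  ext i
  obtain ⟨m, U, V⟩ := i
  rw [map_zero, Finsupp.zero_apply, ← key, ← mul_assoc]
  have hw := hC3 (C m V U) l S T
  set w := C m V U * C l S T - ∑ S', r (C m V U) l S' S • C l S' T with hwdef
  have hsplit : C m V U * C l S T = w + ∑ S', r (C m V U) l S' S • C l S' T := by
    rw [hwdef]; abel
  rw [hsplit, add_mul, map_add]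
  have h1 : τ (w * D l P Q) = 0 := by
    refine Submodule.span_induction ?_ ?_ ?_ ?_ hw
    · rintro x ⟨n, X, Y, hn, rfl⟩
      rw [hdual, if_neg]
      intro h
      obtain rfl : n = l := congrArg Sigma.fst h
      exact lt_irrefl n hn
    · simp
    · intro x y _ _ hx hy; rw [add_mul, map_add, hx, hy, add_zero]
    · intro c x _ hx; rw [smul_mul_assoc, map_smul, hx, smul_zero]
  rw [h1, zero_add, Finset.sum_mul, map_sum]
  apply Finset.sum_eq_zero
  intro S' _
  rw [smul_mul_assoc, map_smul, hdual, if_neg, smul_zero]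
  intro h
  obtain ⟨-, h2⟩ := Sigma.mk.inj_iff.mp h
  exact hTP (Prod.mk_inj.mp (eq_of_heq h2)).2
end

section
/- Let A be a symmetric cellular algebra with cellular basis C and dual basis D. For λ, μ ∈ Λ with μ not ≤ λ, and any S, T ∈ M(λ), U, V ∈ M(μ), one has C^λ_{S,T} D^μ_{U,V} = 0 and D^μ_{U,V} C^λ_{S,T} = 0. -/
/-- Lemma 2.14(7),(8): if `¬ m ≤ l` then `C l S T * D m U V = 0` and `D m U V * C l S T = 0`. -/
theorem cellular_mul_dual_incomparable_vanish
    {R A : Type*} [CommRing R] [Ring A] [Algebra R A]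
    {Λ : Type*} [PartialOrder Λ] [Fintype Λ] [DecidableEq Λ]
    {M : Λ → Type*} [∀ l, Fintype (M l)] [∀ l, DecidableEq (M l)]
    (C D : ∀ l, M l → M l → A)
    (bC : Module.Basis ((l : Λ) × (M l × M l)) R A)
    (hbC : ∀ l S T, bC ⟨l, (S, T)⟩ = C l S T)
    (ι : A →ₗ[R] A)
    (hι2 : ∀ x, ι (ι x) = x)
    (hιmul : ∀ x y, ι (x * y) = ι y * ι x)
    (hC2 : ∀ l (S T : M l), ι (C l S T) - C l T S ∈
      Submodule.span R {x | ∃ m, ∃ U V : M m, m < l ∧ x = C m U V})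
    (r : A → ∀ l, M l → M l → R)
    (hC3 : ∀ (a : A) l (S T : M l), a * C l S T - ∑ S', r a l S' S • C l S' T ∈
      Submodule.span R {x | ∃ m, ∃ U V : M m, m < l ∧ x = C m U V})
    (τ : A →ₗ[R] R)
    (hτtr : ∀ x y, τ (x * y) = τ (y * x))
    (bD : Module.Basis ((l : Λ) × (M l × M l)) R A)
    (hbD : ∀ l S T, bD ⟨l, (S, T)⟩ = D l S T)
    (hdual : ∀ l m (S T : M l) (U V : M m),
      τ (C l S T * D m U V) =
        if (⟨l, (S, T)⟩ : (l : Λ) × (M l × M l)) = ⟨m, (V, U)⟩ then 1 else 0)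
     :
    ∀ l m (S T : M l) (U V : M m), ¬ m ≤ l →
      C l S T * D m U V = 0 ∧ D m U V * C l S T = 0 := by
  -- coordinate criterion for vanishing
  have hzero : ∀ x : A, (∀ (n : Λ) (P Q : M n), τ (C n Q P * x) = 0) → x = 0 := by
    intro x hx
    have hcoord : ∀ i : (l : Λ) × (M l × M l), bD.repr x i = 0 := by
      rintro ⟨n, P, Q⟩
      have hφ : (τ.comp (LinearMap.mulLeft R (C n Q P)))
          = bD.coord ⟨n, (P, Q)⟩ := by
        apply bD.ext
        rintro ⟨k, X, Y⟩
        simp only [LinearMap.comp_apply, LinearMap.mulLeft_apply,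
          Module.Basis.coord_apply, Module.Basis.repr_self]
        rw [hbD, hdual, Finsupp.single_apply]
        by_cases h : k = n
        · subst h
          by_cases h2 : X = P ∧ Y = Q
          · obtain ⟨rfl, rfl⟩ := h2
            simp
          · rw [if_neg, if_neg]
            · intro hh
              obtain ⟨h1, hh2⟩ := Sigma.mk.inj_iff.mp hh
              exact h2 ⟨(Prod.mk.injEq _ _ _ _ ▸ (eq_of_heq hh2)).1,
                (Prod.mk.injEq _ _ _ _ ▸ (eq_of_heq hh2)).2⟩
            · intro hh
              obtain ⟨h1, hh2⟩ := Sigma.mk.inj_iff.mp hh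
              have := eq_of_heq hh2
              rw [Prod.mk.injEq] at this
              exact h2 ⟨this.2.symm, this.1.symm⟩
        · rw [if_neg, if_neg]
          · intro hh; exact h (Sigma.mk.inj_iff.mp hh).1
          · intro hh; exact h (Sigma.mk.inj_iff.mp hh).1.symm
      have := congrFun (congrArg (fun f : A →ₗ[R] R => (f : A → R)) hφ) x
      simp only [LinearMap.comp_apply, LinearMap.mulLeft_apply,
        Module.Basis.coord_apply] at this
      rw [← this, hx]
    have : bD.repr x = 0 := Finsupp.ext hcoord
    exact bD.repr.map_eq_zero_iff.mp this
  intro l m S T U V hml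
  set L : Submodule R A :=
    Submodule.span R {x | ∃ k, ∃ X Y : M k, k ≤ l ∧ x = C k X Y} with hLdef
  have hlow : ∀ k : Λ, k ≤ l →
      Submodule.span R {x | ∃ m', ∃ U' V' : M m', m' < k ∧ x = C m' U' V'} ≤ L := by
    intro k hk
    apply Submodule.span_mono
    rintro x ⟨m', U', V', hm', rfl⟩
    exact ⟨m', U', V', hm'.le.trans hk, rfl⟩
  have hmemL : ∀ k (X Y : M k), k ≤ l → C k X Y ∈ L := fun k X Y hk =>
    Submodule.subset_span ⟨k, X, Y, hk, rfl⟩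
  -- L is a left ideal
  have hmulL : ∀ (a x : A), x ∈ L → a * x ∈ L := by
    intro a x hx
    refine Submodule.span_induction ?_ ?_ ?_ ?_ hx
    · rintro y ⟨k, X, Y, hk, rfl⟩
      have h3 := hC3 a k X Y
      have heq : a * C k X Y
          = (∑ S', r a k S' X • C k S' Y) + (a * C k X Y - ∑ S', r a k S' X • C k S' Y) := by
        abel
      rw [heq]
      exact add_mem (Submodule.sum_mem _ fun S' _ =>
        Submodule.smul_mem _ _ (hmemL k S' Y hk)) (hlow k hk h3)
    · simp
    · intro y z _ _ hy hz
      rw [mul_add]; exact add_mem hy hz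
    · intro c y _ hy
      rw [mul_smul_comm]; exact Submodule.smul_mem _ _ hy
  -- L is stable under ι
  have hiL : ∀ x : A, x ∈ L → ι x ∈ L := by
    intro x hx
    refine Submodule.span_induction ?_ ?_ ?_ ?_ hx
    · rintro y ⟨k, X, Y, hk, rfl⟩
      have h2 := hC2 k X Y
      have heq : ι (C k X Y) = C k Y X + (ι (C k X Y) - C k Y X) := by abel
      rw [heq]
      exact add_mem (hmemL k Y X hk) (hlow k hk h2)
    · simp
    · intro y z _ _ hy hz
      rw [map_add]; exact add_mem hy hz
    · intro c y _ hy
      rw [map_smul]; exact Submodule.smul_mem _ _ hy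
  have haC : ∀ a : A, a * C l S T ∈ L := fun a =>
    hmulL a _ (hmemL l S T le_rfl)
  have hCa : ∀ a : A, C l S T * a ∈ L := by
    intro a
    have h1 : ι (C l S T) ∈ L := by
      have h2 := hC2 l S T
      have heq : ι (C l S T) = C l T S + (ι (C l S T) - C l T S) := by abel
      rw [heq]
      exact add_mem (hmemL l T S le_rfl) (hlow l le_rfl h2)
    have h3 : ι (ι a * ι (C l S T)) ∈ L := hiL _ (hmulL (ι a) _ h1)
    rwa [hιmul, hι2, hι2] at h3
  -- τ (· * D m U V) vanishes on L
  have hψL : ∀ x : A, x ∈ L → τ (x * D m U V) = 0 := by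
    intro x hx
    have hle : L ≤ LinearMap.ker (τ.comp (LinearMap.mulRight R (D m U V))) := by
      rw [hLdef, Submodule.span_le]
      rintro y ⟨k, X, Y, hk, rfl⟩
      simp only [SetLike.mem_coe, LinearMap.mem_ker, LinearMap.comp_apply,
        LinearMap.mulRight_apply]
      rw [hdual, if_neg]
      intro hh
      have hkm : k = m := (Sigma.mk.inj_iff.mp hh).1
      exact hml (hkm ▸ hk)
    have := hle hx
    simpa using this
  refine ⟨?_, ?_⟩
  · apply hzero
    intro n P Q
    rw [← mul_assoc]
    exact hψL _ (haC _)
  · apply hzero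
    intro n P Q
    rw [← mul_assoc, hτtr, ← mul_assoc]
    exact hψL _ (hCa _)
end

section
/- Let A be a symmetric cellular algebra. For every λ ∈ Λ and S, T, U, V, P ∈ M(λ): C^λ_{S,T} D^λ_{T,U} C^λ_{U,V} D^λ_{V,P} = (Σ_{Y ∈ M(λ)} Φ(Y,V) Ψ(Y,V)) · C^λ_{S,T} D^λ_{T,P}, where Φ is the bilinear form from the cellular basis C and Ψ the bilinear form from the dual cellular basis D. -/
/-- Lemma 2.17: `C l S T * D l T U * C l U V * D l V P
  = (∑ Y, Φ l Y V * Ψ l Y V) • (C l S T * D l T P)`. -/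
theorem cellular_fourfold_product
    {R A : Type*} [CommRing R] [Ring A] [Algebra R A]
    {Λ : Type*} [PartialOrder Λ] [Fintype Λ] [DecidableEq Λ]
    {M : Λ → Type*} [∀ l, Fintype (M l)] [∀ l, DecidableEq (M l)]
    (C D : ∀ l, M l → M l → A)
    (bC : Module.Basis ((l : Λ) × (M l × M l)) R A)
    (hbC : ∀ l S T, bC ⟨l, (S, T)⟩ = C l S T)
    (ι : A →ₗ[R] A)
    (hι2 : ∀ x, ι (ι x) = x)
    (hιmul : ∀ x y, ι (x * y) = ι y * ι x)
    (hC2 : ∀ l (S T : M l), ι (C l S T) - C l T S ∈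
      Submodule.span R {x | ∃ m, ∃ U V : M m, m < l ∧ x = C m U V})
    (r : A → ∀ l, M l → M l → R)
    (hC3 : ∀ (a : A) l (S T : M l), a * C l S T - ∑ S', r a l S' S • C l S' T ∈
      Submodule.span R {x | ∃ m, ∃ U V : M m, m < l ∧ x = C m U V})
    (τ : A →ₗ[R] R)
    (hτtr : ∀ x y, τ (x * y) = τ (y * x))
    (bD : Module.Basis ((l : Λ) × (M l × M l)) R A)
    (hbD : ∀ l S T, bD ⟨l, (S, T)⟩ = D l S T)
    (hdual : ∀ l m (S T : M l) (U V : M m),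
      τ (C l S T * D m U V) =
        if (⟨l, (S, T)⟩ : (l : Λ) × (M l × M l)) = ⟨m, (V, U)⟩ then 1 else 0)
    (Φ Ψ : ∀ l, M l → M l → R)
    (hΦ : ∀ l (S T U V : M l), C l S T * C l U V - Φ l T U • C l S V ∈
      Submodule.span R {x | ∃ m, ∃ U' V' : M m, m < l ∧ x = C m U' V'})
    (hΨ : ∀ l (S T U V : M l), D l S T * D l U V - Ψ l T U • D l S V ∈
      Submodule.span R {x | ∃ m, ∃ U' V' : M m, l < m ∧ x = D m U' V'})
     :
    ∀ l (S T U V P : M l),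
      C l S T * D l T U * (C l U V * D l V P) =
        (∑ Y : M l, Φ l Y V * Ψ l Y V) • (C l S T * D l T P) := by

  intro l S T U V P
  classical
  set lt : Submodule R A :=
    Submodule.span R {x | ∃ m, ∃ U V : M m, m < l ∧ x = C m U V} with hlt_def
  -- generators and monotonicity
  have hgen : ∀ (m : Λ), m < l → ∀ (E F : M m), C m E F ∈ lt := by
    intro m hm E F
    exact Submodule.subset_span ⟨m, E, F, hm, rfl⟩
  have hmono : ∀ (m : Λ), m < l →
      Submodule.span R {x | ∃ m', ∃ U V : M m', m' < m ∧ x = C m' U V} ≤ lt := by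
    intro m hm
    refine Submodule.span_le.mpr ?_
    rintro x ⟨m', E, F, hm', rfl⟩
    exact hgen m' (hm'.trans hm) E F
  -- sigma helpers
  have sigEq : ∀ {m : Λ} (p q : M m × M m),
      (⟨m, p⟩ : (l : Λ) × (M l × M l)) = ⟨m, q⟩ → p = q := by
    intro m p q h
    exact eq_of_heq (Sigma.mk.inj_iff.mp h).2
  -- τ extracts bD-coefficients
  have hτD : ∀ (x : A) (m : Λ) (E F : M m),
      τ (C m F E * x) = bD.repr x ⟨m, (E, F)⟩ := by
    intro x m E F
    conv_lhs => rw [← bD.sum_repr x]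
    rw [Finset.mul_sum, map_sum]
    rw [Finset.sum_eq_single (⟨m, (E, F)⟩ : (l : Λ) × (M l × M l))]
    · rw [mul_smul_comm, map_smul, hbD, hdual, if_pos rfl, smul_eq_mul, mul_one]
    · rintro ⟨m', E', F'⟩ - hne
      rw [mul_smul_comm, map_smul, hbD, hdual, if_neg, smul_zero]
      intro h
      rcases Sigma.mk.inj_iff.mp h with ⟨rfl, h2⟩
      injection eq_of_heq h2 with h4 h5
      exact hne (by rw [← h4, ← h5])
    · intro h; exact absurd (Finset.mem_univ _) h
  have hzero : ∀ x : A, (∀ (m : Λ) (E F : M m), τ (C m F E * x) = 0) → x = 0 := by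
    intro x hx
    refine bD.ext_elem fun i => ?_
    rcases i with ⟨m, E, F⟩
    rw [← hτD x m E F]
    simp [hx m E F]
  have heqtest : ∀ x y : A,
      (∀ (m : Λ) (E F : M m), τ (C m F E * x) = τ (C m F E * y)) → x = y := by
    intro x y h
    have h0 : x - y = 0 :=
      hzero _ (fun m E F => by rw [mul_sub, map_sub, h m E F, sub_self])
    exact sub_eq_zero.mp h0
  -- τ kills lt * D^l
  have hτlt : ∀ w ∈ lt, ∀ (X Y : M l), τ (w * D l X Y) = 0 := by
    intro w hw X Y
    have hle : lt ≤ LinearMap.ker (τ ∘ₗ (LinearMap.mulRight R (D l X Y))) := by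
      refine Submodule.span_le.mpr ?_
      rintro x ⟨m, E, F, hm, rfl⟩
      simp only [SetLike.mem_coe, LinearMap.mem_ker, LinearMap.comp_apply,
        LinearMap.mulRight_apply]
      rw [hdual, if_neg]
      intro h
      exact absurd (Sigma.mk.inj_iff.mp h).1 (ne_of_lt hm)
    exact hle hw
  -- τ kills C^l * (span of higher D's)
  have hτgt : ∀ (X Y : M l), ∀ w ∈
      Submodule.span R {x | ∃ m, ∃ U' V' : M m, l < m ∧ x = D m U' V'},
      τ (C l X Y * w) = 0 := by
    intro X Y w hw
    have hle : Submodule.span R {x | ∃ m, ∃ U' V' : M m, l < m ∧ x = D m U' V'} ≤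
        LinearMap.ker (τ ∘ₗ (LinearMap.mulLeft R (C l X Y))) := by
      refine Submodule.span_le.mpr ?_
      rintro x ⟨m, E, F, hm, rfl⟩
      simp only [SetLike.mem_coe, LinearMap.mem_ker, LinearMap.comp_apply,
        LinearMap.mulLeft_apply]
      rw [hdual, if_neg]
      intro h
      exact absurd (Sigma.mk.inj_iff.mp h).1 (ne_of_lt hm)
    exact hle hw
  -- lt is a left ideal
  have hIl : ∀ (a : A), ∀ w ∈ lt, a * w ∈ lt := by
    intro a w hw
    have hle : lt ≤ lt.comap (LinearMap.mulLeft R a) := by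
      refine Submodule.span_le.mpr ?_
      rintro x ⟨m, E, F, hm, rfl⟩
      simp only [SetLike.mem_coe, Submodule.mem_comap, LinearMap.mulLeft_apply]
      have h2 : a * C m E F =
          (a * C m E F - ∑ S', r a m S' E • C m S' F) + ∑ S', r a m S' E • C m S' F := by
        abel
      rw [h2]
      exact Submodule.add_mem _ (hmono m hm (hC3 a m E F))
        (Submodule.sum_mem _ fun S' _ => Submodule.smul_mem _ _ (hgen m hm S' F))
    exact hle hw
  -- lt is ι-stable
  have hιlt : ∀ w ∈ lt, ι w ∈ lt := by
    intro w hw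
    have hle : lt ≤ lt.comap ι := by
      refine Submodule.span_le.mpr ?_
      rintro x ⟨m, E, F, hm, rfl⟩
      simp only [SetLike.mem_coe, Submodule.mem_comap]
      have h2 : ι (C m E F) = (ι (C m E F) - C m F E) + C m F E := by abel
      rw [h2]
      exact Submodule.add_mem _ (hmono m hm (hC2 m E F)) (hgen m hm F E)
    exact hle hw
  -- lt is a right ideal
  have hIr : ∀ (a : A), ∀ w ∈ lt, w * a ∈ lt := by
    intro a w hw
    have h2 : w * a = ι (ι a * ι w) := by rw [← hιmul, hι2]
    rw [h2]
    exact hιlt _ (hIl _ _ (hιlt _ hw))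
  -- lt * D^l = 0
  have hltD : ∀ w ∈ lt, ∀ (X Y : M l), w * D l X Y = 0 := by
    intro w hw X Y
    apply hzero
    intro m E F
    rw [← mul_assoc]
    exact hτlt _ (hIl _ _ hw) X Y
  -- the key identity r (D l F E) l X Y = Ψ l X F * δ_{Y,E}
  have hrΨ : ∀ (F E X Y : M l),
      r (D l F E) l X Y = Ψ l X F * (if Y = E then 1 else 0) := by
    intro F E X Y
    have e2 : τ (C l Y V * (D l V X * D l F E)) = r (D l F E) l X Y := by
      rw [← mul_assoc]
      rw [hτtr]
      rw [← mul_assoc]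
      have h1 : τ ((D l F E * C l Y V - ∑ S', r (D l F E) l S' Y • C l S' V)
          * D l V X) = 0 := hτlt _ (hC3 (D l F E) l Y V) V X
      rw [sub_mul, map_sub, sub_eq_zero] at h1
      rw [h1, Finset.sum_mul, map_sum, Finset.sum_eq_single X]
      · rw [smul_mul_assoc, map_smul, hdual, if_pos rfl, smul_eq_mul, mul_one]
      · intro b _ hb
        rw [smul_mul_assoc, map_smul, hdual, if_neg, smul_zero]
        intro h
        exact hb (Prod.ext_iff.mp (sigEq _ _ h)).1
      · intro h; exact absurd (Finset.mem_univ _) h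
    have e1 : τ (C l Y V * (D l V X * D l F E)) = Ψ l X F * (if Y = E then 1 else 0) := by
      have h0 : τ (C l Y V * (D l V X * D l F E - Ψ l X F • D l V E)) = 0 :=
        hτgt Y V _ (hΨ l V X F E)
      rw [mul_sub, map_sub, sub_eq_zero] at h0
      rw [h0, mul_smul_comm, map_smul, hdual, smul_eq_mul]
      by_cases hYE : Y = E
      · subst hYE
        rw [if_pos rfl, if_pos rfl]
      · rw [if_neg hYE, if_neg, mul_zero]
        intro h
        exact hYE (Prod.ext_iff.mp (sigEq _ _ h)).1
    exact e2.symm.trans e1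
  -- the fourfold product formula with scalar depending on T'
  have hstar : ∀ (S' T' U' V' P' : M l),
      C l S' T' * D l T' U' * (C l U' V' * D l V' P') =
        (∑ Y : M l, Φ l T' Y * Ψ l Y T') • (C l S' V' * D l V' P') := by
    intro S' T' U' V' P'
    have hassoc : C l S' T' * D l T' U' * (C l U' V' * D l V' P') =
        C l S' T' * (D l T' U' * C l U' V') * D l V' P' := by
      rw [mul_assoc (C l S' T') (D l T' U'), ← mul_assoc (D l T' U'),
        ← mul_assoc (C l S' T')]
    have h0 := hC3 (D l T' U') l U' V'
    have hsplit : D l T' U' * C l U' V' =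
        (∑ S'', r (D l T' U') l S'' U' • C l S'' V') +
          (D l T' U' * C l U' V' - ∑ S'', r (D l T' U') l S'' U' • C l S'' V') := by
      abel
    rw [hassoc, hsplit, mul_add, add_mul, Finset.mul_sum, Finset.sum_mul]
    have hterm2 : C l S' T' *
        (D l T' U' * C l U' V' - ∑ S'', r (D l T' U') l S'' U' • C l S'' V') *
          D l V' P' = 0 := hltD _ (hIl _ _ h0) V' P'
    rw [hterm2, add_zero]
    have hterm1 : ∀ S'' : M l,
        C l S' T' * (r (D l T' U') l S'' U' • C l S'' V') * D l V' P'
          = (r (D l T' U') l S'' U' * Φ l T' S'') • (C l S' V' * D l V' P') := by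
      intro S''
      rw [mul_smul_comm, smul_mul_assoc]
      have h3 : (C l S' T' * C l S'' V' - Φ l T' S'' • C l S' V') * D l V' P' = 0 :=
        hltD _ (hΦ l S' T' S'' V') V' P'
      rw [sub_mul, sub_eq_zero] at h3
      rw [h3, smul_mul_assoc, smul_smul]
    rw [Finset.sum_congr rfl (fun S'' _ => hterm1 S''), ← Finset.sum_smul]
    congr 1
    refine Finset.sum_congr rfl fun Y _ => ?_
    rw [hrΨ, if_pos rfl, mul_one, mul_comm]
  -- middle-index independence
  have hmid : ∀ (S' P' X Y : M l), C l S' X * D l X P' = C l S' Y * D l Y P' := by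
    intro S' P' X Y
    apply heqtest
    intro m E F
    have gen : ∀ Z : M l, τ (C m F E * (C l S' Z * D l Z P')) = r (C m F E) l P' S' := by
      intro Z
      rw [← mul_assoc]
      have h1 : τ ((C m F E * C l S' Z - ∑ S'', r (C m F E) l S'' S' • C l S'' Z)
          * D l Z P') = 0 := hτlt _ (hC3 (C m F E) l S' Z) Z P'
      rw [sub_mul, map_sub, sub_eq_zero] at h1
      rw [h1, Finset.sum_mul, map_sum, Finset.sum_eq_single P']
      · rw [smul_mul_assoc, map_smul, hdual, if_pos rfl, smul_eq_mul, mul_one]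
      · intro b _ hb
        rw [smul_mul_assoc, map_smul, hdual, if_neg, smul_zero]
        intro h
        exact hb (Prod.ext_iff.mp (sigEq _ _ h)).1
      · intro h; exact absurd (Finset.mem_univ _) h
    rw [gen X, gen Y]
  -- the scalar is constant
  have hκ : (∑ Y : M l, Φ l T Y * Ψ l Y T) = ∑ Y : M l, Φ l V Y * Ψ l Y V := by
    have t1 : τ (C l P T * D l T U * (C l U V * D l V P)) =
        ∑ Y : M l, Φ l T Y * Ψ l Y T := by
      rw [hstar P T U V P, map_smul, hdual, if_pos rfl, smul_eq_mul, mul_one]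
    have t2 : τ (C l U V * D l V P * (C l P T * D l T U)) =
        ∑ Y : M l, Φ l V Y * Ψ l Y V := by
      rw [hstar U V P T U, map_smul, hdual, if_pos rfl, smul_eq_mul, mul_one]
    rw [← t1, ← t2, hτtr]
  -- Φ is symmetric
  have hΦsym : ∀ X Y : M l, Φ l X Y = Φ l Y X := by
    intro X Y
    have m1 : ι (C l T X * C l Y T) - Φ l X Y • C l T T ∈ lt := by
      have h1 : ι (C l T X * C l Y T) - Φ l X Y • ι (C l T T) ∈ lt := by
        have h0 := hιlt _ (hΦ l T X Y T)
        rw [map_sub, map_smul] at h0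
        exact h0
      have h2 := hC2 l T T
      have he : ι (C l T X * C l Y T) - Φ l X Y • C l T T
          = (ι (C l T X * C l Y T) - Φ l X Y • ι (C l T T))
            + Φ l X Y • (ι (C l T T) - C l T T) := by
        rw [smul_sub]; abel
      rw [he]
      exact Submodule.add_mem _ h1 (Submodule.smul_mem _ _ h2)
    have m2 : ι (C l T X * C l Y T) - Φ l Y X • C l T T ∈ lt := by
      rw [hιmul]
      have w1 := hC2 l Y T
      have w2 := hC2 l T X
      have w3 := hΦ l T Y X T
      have he : ι (C l Y T) * ι (C l T X) - Φ l Y X • C l T T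
          = (ι (C l Y T) - C l T Y) * ι (C l T X)
            + C l T Y * (ι (C l T X) - C l X T)
            + (C l T Y * C l X T - Φ l Y X • C l T T) := by
        rw [sub_mul, mul_sub]; abel
      rw [he]
      exact Submodule.add_mem _ (Submodule.add_mem _ (hIr _ _ w1) (hIl _ _ w2)) w3
    have m3 : Φ l X Y • C l T T - Φ l Y X • C l T T ∈ lt := by
      have hsub := Submodule.sub_mem _ m2 m1
      have he : (ι (C l T X * C l Y T) - Φ l Y X • C l T T)
          - (ι (C l T X * C l Y T) - Φ l X Y • C l T T)
            = Φ l X Y • C l T T - Φ l Y X • C l T T := by abel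
      rwa [he] at hsub
    have h4 := hτlt _ m3 T T
    rw [sub_mul, map_sub, smul_mul_assoc, smul_mul_assoc, map_smul, map_smul,
      hdual, if_pos rfl] at h4
    have h5 : Φ l X Y - Φ l Y X = 0 := by simpa using h4
    exact sub_eq_zero.mp h5
  -- final assembly
  rw [hstar S T U V P, hmid S P V T]
  congr 1
  rw [hκ]
  refine Finset.sum_congr rfl fun Y _ => ?_
  rw [hΦsym V Y]
end

section
/- Let A be a symmetric cellular algebra. For each λ ∈ Λ, the quantity Σ_{X ∈ M(λ)} Φ(X,V) Ψ(X,V) is independent of the choice of V ∈ M(λ); this common value is denoted k_λ. -/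
/-- Definition 2.18 is well posed: `∑ X, Φ l X V * Ψ l X V` is independent of `V`. -/
theorem k_lambda_well_defined
    {R A : Type*} [CommRing R] [Ring A] [Algebra R A]
    {Λ : Type*} [PartialOrder Λ] [Fintype Λ] [DecidableEq Λ]
    {M : Λ → Type*} [∀ l, Fintype (M l)] [∀ l, DecidableEq (M l)]
    (C D : ∀ l, M l → M l → A)
    (bC : Module.Basis ((l : Λ) × (M l × M l)) R A)
    (hbC : ∀ l S T, bC ⟨l, (S, T)⟩ = C l S T)
    (ι : A →ₗ[R] A)
    (hι2 : ∀ x, ι (ι x) = x)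
    (hιmul : ∀ x y, ι (x * y) = ι y * ι x)
    (hC2 : ∀ l (S T : M l), ι (C l S T) - C l T S ∈
      Submodule.span R {x | ∃ m, ∃ U V : M m, m < l ∧ x = C m U V})
    (r : A → ∀ l, M l → M l → R)
    (hC3 : ∀ (a : A) l (S T : M l), a * C l S T - ∑ S', r a l S' S • C l S' T ∈
      Submodule.span R {x | ∃ m, ∃ U V : M m, m < l ∧ x = C m U V})
    (τ : A →ₗ[R] R)
    (hτtr : ∀ x y, τ (x * y) = τ (y * x))
    (bD : Module.Basis ((l : Λ) × (M l × M l)) R A)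
    (hbD : ∀ l S T, bD ⟨l, (S, T)⟩ = D l S T)
    (hdual : ∀ l m (S T : M l) (U V : M m),
      τ (C l S T * D m U V) =
        if (⟨l, (S, T)⟩ : (l : Λ) × (M l × M l)) = ⟨m, (V, U)⟩ then 1 else 0)
    (Φ Ψ : ∀ l, M l → M l → R)
    (hΦ : ∀ l (S T U V : M l), C l S T * C l U V - Φ l T U • C l S V ∈
      Submodule.span R {x | ∃ m, ∃ U' V' : M m, m < l ∧ x = C m U' V'})
    (hΨ : ∀ l (S T U V : M l), D l S T * D l U V - Ψ l T U • D l S V ∈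
      Submodule.span R {x | ∃ m, ∃ U' V' : M m, l < m ∧ x = D m U' V'})
     :
    ∀ l (V V' : M l),
      ∑ X : M l, Φ l X V * Ψ l X V = ∑ X : M l, Φ l X V' * Ψ l X V' := by
  intro l V₁ V₂
  classical
  set lo : Submodule R A :=
    Submodule.span R {x | ∃ m, ∃ U V : M m, m < l ∧ x = C m U V} with hlo
  set hi : Submodule R A :=
    Submodule.span R {x | ∃ m, ∃ U' V' : M m, l < m ∧ x = D m U' V'} with hhi
  -- generators of `lo`
  have memloC : ∀ (m : Λ), m < l → ∀ (U V : M m), C m U V ∈ lo := by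
    intro m hm U V
    exact Submodule.subset_span ⟨m, U, V, hm, rfl⟩
  have lomono : ∀ (m : Λ), m < l →
      Submodule.span R {x | ∃ m', ∃ U V : M m', m' < m ∧ x = C m' U V} ≤ lo := by
    intro m hm
    apply Submodule.span_mono
    rintro x ⟨m', U, V, hm', rfl⟩
    exact ⟨m', U, V, hm'.trans hm, rfl⟩
  -- τ kills `lo * D l`
  have hτC0 : ∀ x ∈ lo, ∀ (U W : M l), τ (x * D l U W) = 0 := by
    intro x hx
    induction hx using Submodule.span_induction with
    | mem x hx =>
        obtain ⟨m, S, T, hm, rfl⟩ := hx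
        intro U W
        rw [hdual]
        exact if_neg (fun h => (ne_of_lt hm) (congrArg Sigma.fst h))
    | zero => intro U W; simp
    | add x y _ _ hx hy => intro U W; rw [add_mul, map_add, hx U W, hy U W, add_zero]
    | smul c x _ hx => intro U W; rw [smul_mul_assoc, map_smul, hx U W, smul_zero]
  -- τ kills `C l * hi`
  have hτ0D : ∀ y ∈ hi, ∀ (S T : M l), τ (C l S T * y) = 0 := by
    intro y hy
    induction hy using Submodule.span_induction with
    | mem y hy =>
        obtain ⟨m, U, W, hm, rfl⟩ := hy
        intro S T
        rw [hdual]
        exact if_neg (fun h => (ne_of_lt hm) (congrArg Sigma.fst h))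
    | zero => intro S T; simp
    | add x y _ _ hx hy => intro S T; rw [mul_add, map_add, hx S T, hy S T, add_zero]
    | smul c x _ hx => intro S T; rw [mul_smul_comm, map_smul, hx S T, smul_zero]
  -- `lo` is a left ideal
  have mullo : ∀ (a : A), ∀ x ∈ lo, a * x ∈ lo := by
    intro a x hx
    induction hx using Submodule.span_induction with
    | mem x hx =>
        obtain ⟨m, S, T, hm, rfl⟩ := hx
        have h1 : a * C m S T - ∑ S', r a m S' S • C m S' T ∈ lo := lomono m hm (hC3 a m S T)
        have h2 : (∑ S', r a m S' S • C m S' T) ∈ lo :=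
          Submodule.sum_mem _ (fun S' _ => Submodule.smul_mem _ _ (memloC m hm S' T))
        have h3 := Submodule.add_mem _ h1 h2
        simpa using h3
    | zero => simpa using Submodule.zero_mem lo
    | add x y _ _ hx hy => rw [mul_add]; exact Submodule.add_mem _ hx hy
    | smul c x _ hx => rw [mul_smul_comm]; exact Submodule.smul_mem _ _ hx
  -- `lo` is ι-stable
  have ιlo : ∀ x ∈ lo, ι x ∈ lo := by
    intro x hx
    induction hx using Submodule.span_induction with
    | mem x hx =>
        obtain ⟨m, S, T, hm, rfl⟩ := hx
        have h1 : ι (C m S T) - C m T S ∈ lo := lomono m hm (hC2 m S T)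
        have h3 := Submodule.add_mem _ h1 (memloC m hm T S)
        simpa using h3
    | zero => simpa using Submodule.zero_mem lo
    | add x y _ _ hx hy => rw [map_add]; exact Submodule.add_mem _ hx hy
    | smul c x _ hx => rw [map_smul]; exact Submodule.smul_mem _ _ hx
  -- `lo` is a right ideal
  have mulloR : ∀ (a : A), ∀ x ∈ lo, x * a ∈ lo := by
    intro a x hx
    have h : x * a = ι (ι a * ι x) := by rw [← hιmul, hι2]
    rw [h]
    exact ιlo _ (mullo (ι a) _ (ιlo _ hx))
  -- coordinates at level l vanish on `lo`
  have coordlo : ∀ x ∈ lo, ∀ (P Q : M l), bC.repr x ⟨l, (P, Q)⟩ = 0 := by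
    intro x hx
    induction hx using Submodule.span_induction with
    | mem x hx =>
        obtain ⟨m, S, T, hm, rfl⟩ := hx
        intro P Q
        rw [← hbC, bC.repr_self]
        exact Finsupp.single_eq_of_ne' (fun h => (ne_of_lt hm) (congrArg Sigma.fst h))
    | zero => intro P Q; simp
    | add x y _ _ hx hy => intro P Q; rw [map_add]; simp [hx P Q, hy P Q]
    | smul c x _ hx => intro P Q; rw [map_smul]; simp [hx P Q]
  -- the dual pairing at level l
  have pairCD : ∀ (S T U W : M l),
      τ (C l S T * D l U W) = if S = W ∧ T = U then 1 else 0 := by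
    intro S T U W
    rw [hdual]
    by_cases h : S = W ∧ T = U
    · obtain ⟨h1, h2⟩ := h; subst h1; subst h2; simp
    · rw [if_neg h, if_neg]
      intro hcc
      apply h
      have := (Sigma.mk.inj_iff.mp hcc).2
      have h4 : (S, T) = (W, U) := eq_of_heq this
      exact ⟨congrArg Prod.fst h4, congrArg Prod.snd h4⟩
  -- key lemma : τ (a * C l S T * D l U W) = δ_{T,U} r a l W S
  have L1 : ∀ (a : A) (S T U W : M l),
      τ (a * C l S T * D l U W) = if T = U then r a l W S else 0 := by
    intro a S T U W
    have hw : a * C l S T - ∑ S', r a l S' S • C l S' T ∈ lo := hC3 a l S T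
    have key : a * C l S T
        = (∑ S', r a l S' S • C l S' T) + (a * C l S T - ∑ S', r a l S' S • C l S' T) := by
      abel
    rw [key, add_mul, map_add, hτC0 _ hw U W, add_zero, Finset.sum_mul, map_sum]
    simp only [smul_mul_assoc, map_smul, smul_eq_mul, pairCD]
    by_cases hTU : T = U
    · subst hTU
      simp [Finset.sum_ite_eq']
    · simp [hTU]
  -- r of dual basis elements
  have L3 : ∀ (B Q X : M l), r (D l B Q) l X Q = Ψ l X B := by
    intro B Q X
    have h1 := L1 (D l B Q) Q B B X
    rw [if_pos rfl] at h1
    rw [← h1, mul_assoc, hτtr, mul_assoc]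
    have hw : D l B X * D l B Q - Ψ l X B • D l B Q ∈ hi := hΨ l B X B Q
    have key : D l B X * D l B Q
        = Ψ l X B • D l B Q + (D l B X * D l B Q - Ψ l X B • D l B Q) := by abel
    rw [key, mul_add, map_add, hτ0D _ hw Q B, add_zero, mul_smul_comm, map_smul,
      smul_eq_mul, pairCD]
    simp
  -- triple formula
  have tripleC : ∀ (P B S' T : M l), τ (C l P B * C l S' T * D l T P) = Φ l B S' := by
    intro P B S' T
    have hw : C l P B * C l S' T - Φ l B S' • C l P T ∈ lo := hΦ l P B S' T
    have key : C l P B * C l S' T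
        = Φ l B S' • C l P T + (C l P B * C l S' T - Φ l B S' • C l P T) := by abel
    rw [key, add_mul, map_add, hτC0 _ hw T P, add_zero, smul_mul_assoc, map_smul,
      smul_eq_mul, pairCD]
    simp
  -- the quadruple trace
  have Flem : ∀ (P B S' T : M l),
      τ (C l P B * D l B S' * C l S' T * D l T P) = ∑ X, Φ l B X * Ψ l X B := by
    intro P B S' T
    have hw : D l B S' * C l S' T - ∑ X, r (D l B S') l X S' • C l X T ∈ lo :=
      hC3 (D l B S') l S' T
    have key : D l B S' * C l S' T
        = (∑ X, r (D l B S') l X S' • C l X T)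
          + (D l B S' * C l S' T - ∑ X, r (D l B S') l X S' • C l X T) := by abel
    rw [mul_assoc (C l P B) (D l B S') (C l S' T), key, mul_add, add_mul, map_add,
      hτC0 _ (mullo (C l P B) _ hw) T P, add_zero, Finset.mul_sum]
    simp only [mul_smul_comm, Finset.sum_mul, smul_mul_assoc, map_sum, map_smul, smul_eq_mul]
    refine Finset.sum_congr rfl (fun X _ => ?_)
    rw [tripleC, L3, mul_comm]
  -- Φ is symmetric
  have Φsymm : ∀ (a b : M l), Φ l a b = Φ l b a := by
    intro a b
    have h1 : ι (C l a a * C l b b) - Φ l b a • C l b a ∈ lo := by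
      have e2 : ι (C l b b) = C l b b + (ι (C l b b) - C l b b) := by abel
      have e3 : ι (C l a a) = C l a a + (ι (C l a a) - C l a a) := by abel
      rw [hιmul, e2, e3]
      have expand : (C l b b + (ι (C l b b) - C l b b)) * (C l a a + (ι (C l a a) - C l a a))
          = C l b b * C l a a
            + (C l b b * (ι (C l a a) - C l a a)
              + ((ι (C l b b) - C l b b) * C l a a
                + (ι (C l b b) - C l b b) * (ι (C l a a) - C l a a))) := by
        rw [add_mul, mul_add, mul_add, add_assoc]
      rw [expand, add_sub_right_comm]
      refine Submodule.add_mem _ (hΦ l b b a a) ?_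
      refine Submodule.add_mem _ (mullo _ _ (hC2 l a a)) ?_
      exact Submodule.add_mem _ (mulloR _ _ (hC2 l b b)) (mullo _ _ (hC2 l a a))
    have h2 : ι (C l a a * C l b b) - Φ l a b • C l b a ∈ lo := by
      have key : C l a a * C l b b
          = Φ l a b • C l a b + (C l a a * C l b b - Φ l a b • C l a b) := by abel
      rw [key, map_add, map_smul]
      have e5 : ι (C l a b) = C l b a + (ι (C l a b) - C l b a) := by abel
      rw [e5]
      have hre : Φ l a b • (C l b a + (ι (C l a b) - C l b a))
            + ι (C l a a * C l b b - Φ l a b • C l a b) - Φ l a b • C l b a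
          = Φ l a b • (ι (C l a b) - C l b a)
            + ι (C l a a * C l b b - Φ l a b • C l a b) := by
        rw [smul_add]; abel
      rw [hre]
      exact Submodule.add_mem _ (Submodule.smul_mem _ _ (hC2 l a b)) (ιlo _ (hΦ l a a b b))
    have h3 : (Φ l a b - Φ l b a) • C l b a ∈ lo := by
      have hre : (Φ l a b - Φ l b a) • C l b a
          = (ι (C l a a * C l b b) - Φ l b a • C l b a)
            - (ι (C l a a * C l b b) - Φ l a b • C l b a) := by
        rw [sub_smul]; abel
      rw [hre]
      exact Submodule.sub_mem _ h1 h2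
    have h4 := coordlo _ h3 b a
    rw [map_smul, ← hbC l b a, bC.repr_self] at h4
    simp only [Finsupp.smul_apply, Finsupp.single_eq_same, smul_eq_mul, mul_one] at h4
    exact sub_eq_zero.mp h4
  -- cyclicity : the common value is independent of the index
  have cyc : ∀ (B T : M l), ∑ X, Φ l B X * Ψ l X B = ∑ X, Φ l T X * Ψ l X T := by
    intro B T
    have h1 := Flem B B T T
    have h2 := Flem T T B B
    have h3 : τ (C l B B * D l B T * C l T T * D l T B)
        = τ (C l T T * D l T B * C l B B * D l B T) := by
      rw [mul_assoc (C l B B * D l B T) (C l T T) (D l T B), hτtr, ← mul_assoc]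
    rw [h1, h2] at h3
    exact h3
  have e1 : ∀ (W : M l), ∑ X, Φ l X W * Ψ l X W = ∑ X, Φ l W X * Ψ l X W := by
    intro W
    exact Finset.sum_congr rfl (fun X _ => by rw [Φsymm])
  rw [e1 V₁, e1 V₂, cyc V₁ V₂]
end

section
/- Let A be a symmetric cellular algebra and λ ∈ Λ. Fix an enumeration of M(λ) and let G(λ) = (Φ(S_i,S_j)) and G'(λ) = (Ψ(S_i,S_j)) be the Gram matrices of the cellular basis and of its dual basis. Then G(λ) · G'(λ) = k_λ · E, where E is the identity matrix of size |M(λ)|. -/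
/-- Lemma 2.19: the Gram matrices of the cellular basis and of the dual basis satisfy
`G(l) * G′(l) = k l • 1`. -/
theorem gram_matrices_product
    {R A : Type*} [CommRing R] [Ring A] [Algebra R A]
    {Λ : Type*} [PartialOrder Λ] [Fintype Λ] [DecidableEq Λ]
    {M : Λ → Type*} [∀ l, Fintype (M l)] [∀ l, DecidableEq (M l)]
    (C D : ∀ l, M l → M l → A)
    (bC : Module.Basis ((l : Λ) × (M l × M l)) R A)
    (hbC : ∀ l S T, bC ⟨l, (S, T)⟩ = C l S T)
    (ι : A →ₗ[R] A)
    (hι2 : ∀ x, ι (ι x) = x)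
    (hιmul : ∀ x y, ι (x * y) = ι y * ι x)
    (hC2 : ∀ l (S T : M l), ι (C l S T) - C l T S ∈
      Submodule.span R {x | ∃ m, ∃ U V : M m, m < l ∧ x = C m U V})
    (r : A → ∀ l, M l → M l → R)
    (hC3 : ∀ (a : A) l (S T : M l), a * C l S T - ∑ S', r a l S' S • C l S' T ∈
      Submodule.span R {x | ∃ m, ∃ U V : M m, m < l ∧ x = C m U V})
    (τ : A →ₗ[R] R)
    (hτtr : ∀ x y, τ (x * y) = τ (y * x))
    (bD : Module.Basis ((l : Λ) × (M l × M l)) R A)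
    (hbD : ∀ l S T, bD ⟨l, (S, T)⟩ = D l S T)
    (hdual : ∀ l m (S T : M l) (U V : M m),
      τ (C l S T * D m U V) =
        if (⟨l, (S, T)⟩ : (l : Λ) × (M l × M l)) = ⟨m, (V, U)⟩ then 1 else 0)
    (Φ Ψ : ∀ l, M l → M l → R)
    (hΦ : ∀ l (S T U V : M l), C l S T * C l U V - Φ l T U • C l S V ∈
      Submodule.span R {x | ∃ m, ∃ U' V' : M m, m < l ∧ x = C m U' V'})
    (hΨ : ∀ l (S T U V : M l), D l S T * D l U V - Ψ l T U • D l S V ∈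
      Submodule.span R {x | ∃ m, ∃ U' V' : M m, l < m ∧ x = D m U' V'})
    (k : Λ → R)
    (hk : ∀ l (V : M l), ∑ X : M l, Φ l X V * Ψ l X V = k l) :
    ∀ l, (Matrix.of fun S T : M l => Φ l S T) * (Matrix.of fun S T : M l => Ψ l S T)
      = k l • (1 : Matrix (M l) (M l) R) := by
  -- coordinates with respect to the basis `bC` are computed by pairing with `D` via `τ`
  have coord : ∀ (a : A) (n : Λ) (U V : M n),
      bC.repr a ⟨n, (U, V)⟩ = τ (a * D n V U) := by
    intro a n U V
    have h : bC.coord ⟨n, (U, V)⟩ = τ ∘ₗ LinearMap.mulRight R (D n V U) := by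
      apply bC.ext
      rintro ⟨m, P, Q⟩
      rw [Module.Basis.coord_apply, Module.Basis.repr_self, LinearMap.comp_apply,
        LinearMap.mulRight_apply, hbC, hdual, Finsupp.single_apply]
    have := congrArg (fun f => f a) h
    simpa [Module.Basis.coord_apply] using this
  intro l
  set I : Submodule R A :=
    Submodule.span R {x | ∃ m, ∃ U V : M m, m < l ∧ x = C m U V} with hIdef
  set J : Submodule R A :=
    Submodule.span R {x | ∃ m, ∃ U V : M m, l < m ∧ x = D m U V} with hJdef
  -- pairing of cellular and dual basis elements at different levels vanishes
  have τ0 : ∀ (m n : Λ), m ≠ n → ∀ (P Q : M m) (U V : M n),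
      τ (C m P Q * D n U V) = 0 := by
    intro m n hmn P Q U V
    rw [hdual, if_neg]
    intro h
    have h1 : m = n := congrArg (fun x : (l' : Λ) × M l' × M l' => x.1) h
    exact hmn h1
  -- pairing at the same level
  have τ1 : ∀ S T U V : M l, τ (C l S T * D l U V) = if S = V ∧ T = U then 1 else 0 := by
    intro S T U V
    rw [hdual]
    by_cases h : S = V ∧ T = U
    · obtain ⟨h1, h2⟩ := h
      subst h1; subst h2
      rw [if_pos rfl, if_pos ⟨rfl, rfl⟩]
    · rw [if_neg, if_neg h]
      intro he
      exact h (Prod.mk.inj (eq_of_heq (Sigma.mk.inj_iff.mp he).2))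
  -- τ kills products of lower terms with level-l dual elements
  have T1 : ∀ x ∈ I, ∀ (U V : M l), τ (x * D l U V) = 0 := by
    intro x hx
    induction hx using Submodule.span_induction with
    | mem y hy =>
      obtain ⟨m, P, Q, hm, rfl⟩ := hy
      intro U V
      exact τ0 m l (ne_of_lt hm) P Q U V
    | zero => intro U V; rw [zero_mul, map_zero]
    | add u v hu hv ihu ihv =>
      intro U V
      rw [add_mul, map_add, ihu U V, ihv U V, add_zero]
    | smul c u hu ihu =>
      intro U V
      rw [smul_mul_assoc, map_smul, ihu U V, smul_zero]
  -- τ kills products of level-l cellular elements with higher dual terms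
  have T2 : ∀ y ∈ J, ∀ (U V : M l), τ (C l U V * y) = 0 := by
    intro y hy
    induction hy using Submodule.span_induction with
    | mem z hz =>
      obtain ⟨m, P, Q, hm, rfl⟩ := hz
      intro U V
      rw [hdual, if_neg]
      intro h
      have h1 : l = m := congrArg (fun x : (l' : Λ) × M l' × M l' => x.1) h
      exact (ne_of_lt hm) h1
    | zero => intro U V; rw [mul_zero, map_zero]
    | add u v hu hv ihu ihv =>
      intro U V
      rw [mul_add, map_add, ihu U V, ihv U V, add_zero]
    | smul c u hu ihu =>
      intro U V
      rw [mul_smul_comm, map_smul, ihu U V, smul_zero]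
  -- the span of strictly-lower levels (relative to m < l) sits inside I
  have hsub : ∀ m, m < l →
      Submodule.span R {x | ∃ n, ∃ P Q : M n, n < m ∧ x = C n P Q} ≤ I := by
    intro m hm
    apply Submodule.span_le.mpr
    rintro z ⟨n, P, Q, hn, rfl⟩
    exact Submodule.subset_span ⟨n, P, Q, hn.trans hm, rfl⟩
  -- I is a left ideal
  have L1 : ∀ (a x : A), x ∈ I → a * x ∈ I := by
    intro a x hx
    induction hx using Submodule.span_induction with
    | mem y hy =>
      obtain ⟨m, U, V, hm, rfl⟩ := hy
      have h3 := hC3 a m U V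
      have e : a * C m U V
          = (a * C m U V - ∑ S', r a m S' U • C m S' V) + ∑ S', r a m S' U • C m S' V := by
        abel
      rw [e]
      exact I.add_mem (hsub m hm h3)
        (Submodule.sum_mem _ fun S' _ =>
          I.smul_mem _ (Submodule.subset_span ⟨m, S', V, hm, rfl⟩))
    | zero => rw [mul_zero]; exact I.zero_mem
    | add u v hu hv ihu ihv => rw [mul_add]; exact I.add_mem ihu ihv
    | smul c u hu ihu => rw [mul_smul_comm]; exact I.smul_mem _ ihu
  -- I is stable under ι
  have L2 : ∀ x : A, x ∈ I → ι x ∈ I := by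
    intro x hx
    induction hx using Submodule.span_induction with
    | mem y hy =>
      obtain ⟨m, U, V, hm, rfl⟩ := hy
      have h2 := hC2 m U V
      have e : ι (C m U V) = (ι (C m U V) - C m V U) + C m V U := by abel
      rw [e]
      exact I.add_mem (hsub m hm h2) (Submodule.subset_span ⟨m, V, U, hm, rfl⟩)
    | zero => rw [map_zero]; exact I.zero_mem
    | add u v hu hv ihu ihv => rw [map_add]; exact I.add_mem ihu ihv
    | smul c u hu ihu => rw [map_smul]; exact I.smul_mem _ ihu
  -- I is a right ideal
  have L3 : ∀ (a x : A), x ∈ I → x * a ∈ I := by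
    intro a x hx
    have e : x * a = ι (ι a * ι x) := by rw [hιmul, hι2, hι2]
    rw [e]
    exact L2 _ (L1 _ _ (L2 _ hx))
  -- structure constants: product of two level-l cellular elements against a dual element
  have M1 : ∀ S T U V P Q : M l,
      τ (C l S T * C l U V * D l P Q) = Φ l T U * (if S = Q ∧ V = P then 1 else 0) := by
    intro S T U V P Q
    have h := hΦ l S T U V
    have e : C l S T * C l U V * D l P Q
        = (C l S T * C l U V - Φ l T U • C l S V) * D l P Q
          + Φ l T U • (C l S V * D l P Q) := by
      rw [sub_mul, smul_mul_assoc]; abel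
    rw [e, map_add, map_smul, T1 _ h P Q, τ1, zero_add, smul_eq_mul]
  -- structure constants for the dual basis
  have M2 : ∀ S T U V P Q : M l,
      τ (C l S T * (D l U V * D l P Q)) = Ψ l V P * (if S = Q ∧ T = U then 1 else 0) := by
    intro S T U V P Q
    have h := hΨ l U V P Q
    have e : C l S T * (D l U V * D l P Q)
        = C l S T * (D l U V * D l P Q - Ψ l V P • D l U Q)
          + Ψ l V P • (C l S T * D l U Q) := by
      rw [mul_sub, mul_smul_comm]; abel
    rw [e, map_add, map_smul, T2 _ h S T, τ1, zero_add, smul_eq_mul]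
  -- Φ is symmetric (via the involution ι)
  have ΦS : ∀ T U : M l, Φ l T U = Φ l U T := by
    intro T U
    have h1 : C l T T * C l U U - Φ l T U • C l T U ∈ I := hΦ l T T U U
    have h2 : ι (C l T T * C l U U) - Φ l T U • ι (C l T U) ∈ I := by
      have := L2 _ h1
      rwa [map_sub, map_smul] at this
    have hA : C l U U * C l T T - Φ l T U • C l U T ∈ I := by
      have e : C l U U * C l T T - Φ l T U • C l U T =
          (ι (C l T T * C l U U) - Φ l T U • ι (C l T U))
          - (ι (C l U U) - C l U U) * ι (C l T T)
          - C l U U * (ι (C l T T) - C l T T)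
          + Φ l T U • (ι (C l T U) - C l U T) := by
        rw [hιmul, sub_mul, mul_sub, smul_sub]; abel
      rw [e]
      exact I.add_mem
        (I.sub_mem (I.sub_mem h2 (L3 _ _ (hC2 l U U))) (L1 _ _ (hC2 l T T)))
        (I.smul_mem _ (hC2 l T U))
    have hB : C l U U * C l T T - Φ l U T • C l U T ∈ I := hΦ l U U T T
    have hd : Φ l T U • C l U T - Φ l U T • C l U T ∈ I := by
      have h' := I.sub_mem hB hA
      have e : Φ l T U • C l U T - Φ l U T • C l U T
          = (C l U U * C l T T - Φ l U T • C l U T)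
            - (C l U U * C l T T - Φ l T U • C l U T) := by abel
      rw [e]; exact h'
    have h0 := T1 _ hd T U
    rw [sub_mul, smul_mul_assoc, smul_mul_assoc, map_sub, map_smul, map_smul, τ1,
      if_pos ⟨rfl, rfl⟩, smul_eq_mul, smul_eq_mul, mul_one, mul_one, sub_eq_zero] at h0
    exact h0
  -- the Gram matrix identity, entrywise
  ext S T
  rw [Matrix.mul_apply, Matrix.smul_apply, Matrix.one_apply]
  simp only [Matrix.of_apply]
  by_cases hST : S = T
  · subst hST
    rw [if_pos rfl, smul_eq_mul, mul_one]
    calc ∑ X : M l, Φ l S X * Ψ l X S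
        = ∑ X : M l, Φ l X S * Ψ l X S :=
          Finset.sum_congr rfl fun X _ => by rw [ΦS S X]
      _ = k l := hk l S
  · rw [if_neg hST, smul_zero]
    -- key vanishing: C l S S * D l T S = 0
    have hzero : C l S S * D l T S = 0 := by
      have h0 : bC.repr (C l S S * D l T S) = 0 := by
        ext i
        rw [coord]
        obtain ⟨m, P, Q⟩ := i
        simp only [Finsupp.coe_zero, Pi.zero_apply]
        by_cases hm : m = l
        · subst hm
          rw [mul_assoc, M2, if_neg (fun h => hST h.2), mul_zero]
        · rw [hτtr, ← mul_assoc]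
          have h3 := hC3 (D m Q P) l S S
          have e : D m Q P * C l S S * D l T S
              = (D m Q P * C l S S - ∑ S', r (D m Q P) l S' S • C l S' S) * D l T S
                + ∑ S', r (D m Q P) l S' S • (C l S' S * D l T S) := by
            rw [sub_mul, Finset.sum_mul]
            simp_rw [smul_mul_assoc]
            abel
          rw [e, map_add, T1 _ h3 T S, zero_add, map_sum]
          refine Finset.sum_eq_zero fun S' _ => ?_
          rw [map_smul, τ1, if_neg (fun h => hST h.2), smul_zero]
      exact bC.repr.map_eq_zero_iff.mp h0
    -- expansion of D l T S * C l S S in level-l cellular elements, mod I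
    have hR : D l T S * C l S S - ∑ X' : M l, Ψ l X' T • C l X' S ∈ I := by
      have h3 := hC3 (D l T S) l S S
      have hr : ∀ X' : M l, r (D l T S) l X' S = Ψ l X' T := by
        intro X'
        have h4 := T1 _ h3 S X'
        have e : D l T S * C l S S * D l S X'
            = (D l T S * C l S S - ∑ S', r (D l T S) l S' S • C l S' S) * D l S X'
              + ∑ S', r (D l T S) l S' S • (C l S' S * D l S X') := by
          rw [sub_mul, Finset.sum_mul]
          simp_rw [smul_mul_assoc]
          abel
        have h5 : τ (D l T S * C l S S * D l S X') = r (D l T S) l X' S := by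
          rw [e, map_add, h4, zero_add, map_sum]
          rw [Finset.sum_eq_single X']
          · rw [map_smul, τ1, if_pos ⟨rfl, rfl⟩, smul_eq_mul, mul_one]
          · intro b _ hb
            rw [map_smul, τ1, if_neg (fun h => hb h.1), smul_zero]
          · intro h; exact absurd (Finset.mem_univ _) h
        have h6 : τ (D l T S * C l S S * D l S X') = Ψ l X' T := by
          rw [mul_assoc, hτtr, mul_assoc, M2, if_pos ⟨rfl, rfl⟩, mul_one]
        rw [← h5, h6]
      have e : (∑ X' : M l, Ψ l X' T • C l X' S)
          = ∑ S' : M l, r (D l T S) l S' S • C l S' S :=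
        Finset.sum_congr rfl fun X' _ => by rw [hr X']
      rw [e]
      exact h3
    -- compute τ(C S S * D T S * (C S S * D S S)) in two ways
    have hg0 : τ (C l S S * D l T S * (C l S S * D l S S)) = 0 := by
      rw [hzero, zero_mul, map_zero]
    have hg1 : τ (C l S S * D l T S * (C l S S * D l S S))
        = ∑ X : M l, Φ l S X * Ψ l X T := by
      have e : C l S S * D l T S * (C l S S * D l S S)
          = C l S S * (D l T S * C l S S) * D l S S := by
        simp only [mul_assoc]
      rw [e]
      have e2 : D l T S * C l S S
          = (∑ X' : M l, Ψ l X' T • C l X' S)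
            + (D l T S * C l S S - ∑ X' : M l, Ψ l X' T • C l X' S) := by abel
      rw [e2, mul_add, add_mul, map_add]
      have hz2 : τ (C l S S * (D l T S * C l S S - ∑ X' : M l, Ψ l X' T • C l X' S)
          * D l S S) = 0 := T1 _ (L1 _ _ hR) S S
      rw [hz2, add_zero, Finset.mul_sum, Finset.sum_mul, map_sum]
      refine Finset.sum_congr rfl fun X _ => ?_
      rw [mul_smul_comm, smul_mul_assoc, map_smul, M1, if_pos ⟨rfl, rfl⟩,
        mul_one, smul_eq_mul, mul_comm]
    rw [← hg1, hg0]
end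

section
/- Let A be a symmetric cellular algebra over an integral domain R. For any λ ∈ Λ, if the radical of the bilinear form Φ_λ on the cell module W(λ) is nonzero (equivalently det G(λ) = 0), then k_λ = 0. -/
/-- Corollary 2.20: over an integral domain, if the radical of the bilinear form on
the cell module `W(l)` is nonzero (there is a nonzero vector orthogonal to everything),
then `k l = 0`. -/
theorem k_lambda_zero_of_rad_nonzero
    {R A : Type*} [CommRing R] [Ring A] [Algebra R A]
    {Λ : Type*} [PartialOrder Λ] [Fintype Λ] [DecidableEq Λ]
    {M : Λ → Type*} [∀ l, Fintype (M l)] [∀ l, DecidableEq (M l)]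
    (C D : ∀ l, M l → M l → A)
    (bC : Module.Basis ((l : Λ) × (M l × M l)) R A)
    (hbC : ∀ l S T, bC ⟨l, (S, T)⟩ = C l S T)
    (ι : A →ₗ[R] A)
    (hι2 : ∀ x, ι (ι x) = x)
    (hιmul : ∀ x y, ι (x * y) = ι y * ι x)
    (hC2 : ∀ l (S T : M l), ι (C l S T) - C l T S ∈
      Submodule.span R {x | ∃ m, ∃ U V : M m, m < l ∧ x = C m U V})
    (r : A → ∀ l, M l → M l → R)
    (hC3 : ∀ (a : A) l (S T : M l), a * C l S T - ∑ S', r a l S' S • C l S' T ∈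
      Submodule.span R {x | ∃ m, ∃ U V : M m, m < l ∧ x = C m U V})
    (τ : A →ₗ[R] R)
    (hτtr : ∀ x y, τ (x * y) = τ (y * x))
    (bD : Module.Basis ((l : Λ) × (M l × M l)) R A)
    (hbD : ∀ l S T, bD ⟨l, (S, T)⟩ = D l S T)
    (hdual : ∀ l m (S T : M l) (U V : M m),
      τ (C l S T * D m U V) =
        if (⟨l, (S, T)⟩ : (l : Λ) × (M l × M l)) = ⟨m, (V, U)⟩ then 1 else 0)
    (Φ Ψ : ∀ l, M l → M l → R)
    (hΦ : ∀ l (S T U V : M l), C l S T * C l U V - Φ l T U • C l S V ∈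
      Submodule.span R {x | ∃ m, ∃ U' V' : M m, m < l ∧ x = C m U' V'})
    (hΨ : ∀ l (S T U V : M l), D l S T * D l U V - Ψ l T U • D l S V ∈
      Submodule.span R {x | ∃ m, ∃ U' V' : M m, l < m ∧ x = D m U' V'})
    [IsDomain R]
    (k : Λ → R)
    (hk : ∀ l (V : M l), ∑ X : M l, Φ l X V * Ψ l X V = k l) :
    ∀ l, (∃ v : M l → R, v ≠ 0 ∧ ∀ T : M l, ∑ S : M l, v S * Φ l S T = 0) →
      k l = 0 := by
  classical
  intro l hex
  obtain ⟨v, hv0, hv⟩ := hex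
  set Lo : Submodule R A :=
    Submodule.span R {x | ∃ m, ∃ U V : M m, m < l ∧ x = C m U V} with hLo
  set Hi : Submodule R A :=
    Submodule.span R {x | ∃ m, ∃ U V : M m, l < m ∧ x = D m U V} with hHi
  -- τ (x * D l c d) vanishes for x in the lower ideal
  have tD : ∀ (c d : M l) (x : A), x ∈ Lo → τ (x * D l c d) = 0 := by
    intro c d x hx
    have hle : Lo ≤ LinearMap.ker (τ ∘ₗ LinearMap.mulRight R (D l c d)) := by
      rw [hLo, Submodule.span_le]
      rintro y ⟨m, U, V, hm, rfl⟩
      simp only [SetLike.mem_coe, LinearMap.mem_ker, LinearMap.coe_comp,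
        Function.comp_apply, LinearMap.mulRight_apply]
      rw [hdual, if_neg]
      exact fun h => (ne_of_lt hm) (congrArg Sigma.fst h)
    simpa using hle hx
  have tC : ∀ (a b : M l) (y : A), y ∈ Hi → τ (C l a b * y) = 0 := by
    intro a b y hy
    have hle : Hi ≤ LinearMap.ker (τ ∘ₗ LinearMap.mulLeft R (C l a b)) := by
      rw [hHi, Submodule.span_le]
      rintro z ⟨m, U, V, hm, rfl⟩
      simp only [SetLike.mem_coe, LinearMap.mem_ker, LinearMap.coe_comp,
        Function.comp_apply, LinearMap.mulLeft_apply]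
      rw [hdual, if_neg]
      exact fun h => (ne_of_lt hm) (congrArg Sigma.fst h)
    simpa using hle hy
  -- Lo is a left ideal
  have leftI : ∀ (a x : A), x ∈ Lo → a * x ∈ Lo := by
    intro a x hx
    have hle : Lo ≤ Submodule.comap (LinearMap.mulLeft R a) Lo := by
      rw [hLo, Submodule.span_le]
      rintro y ⟨m, U, V, hm, rfl⟩
      simp only [SetLike.mem_coe, Submodule.mem_comap, LinearMap.mulLeft_apply]
      have hmono : Submodule.span R {x | ∃ n, ∃ U' V' : M n, n < m ∧ x = C n U' V'} ≤ Lo := by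
        rw [hLo, Submodule.span_le]
        rintro z ⟨n, U', V', hn, rfl⟩
        exact Submodule.subset_span ⟨n, U', V', hn.trans hm, rfl⟩
      have heq : a * C m U V = (a * C m U V - ∑ S', r a m S' U • C m S' V)
          + ∑ S', r a m S' U • C m S' V := by abel
      rw [heq]
      refine Submodule.add_mem _ (hmono (hC3 a m U V)) (Submodule.sum_mem _ fun S' _ => ?_)
      exact Submodule.smul_mem _ _ (Submodule.subset_span ⟨m, S', V, hm, rfl⟩)
    exact hle hx
  -- ι preserves Lo
  have iotaLo : ∀ (x : A), x ∈ Lo → ι x ∈ Lo := by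
    intro x hx
    have hle : Lo ≤ Submodule.comap ι Lo := by
      rw [hLo, Submodule.span_le]
      rintro y ⟨m, U, V, hm, rfl⟩
      simp only [SetLike.mem_coe, Submodule.mem_comap]
      have hmono : Submodule.span R {x | ∃ n, ∃ U' V' : M n, n < m ∧ x = C n U' V'} ≤ Lo := by
        rw [hLo, Submodule.span_le]
        rintro z ⟨n, U', V', hn, rfl⟩
        exact Submodule.subset_span ⟨n, U', V', hn.trans hm, rfl⟩
      have heq : ι (C m U V) = (ι (C m U V) - C m V U) + C m V U := by abel
      rw [heq]
      exact Submodule.add_mem _ (hmono (hC2 m U V))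
        (Submodule.subset_span ⟨m, V, U, hm, rfl⟩)
    exact hle hx
  -- Lo is a right ideal
  have rightI : ∀ (x a : A), x ∈ Lo → x * a ∈ Lo := by
    intro x a hx
    have heq : x * a = ι (ι a * ι x) := by rw [← hιmul, hι2]
    rw [heq]
    exact iotaLo _ (leftI _ _ (iotaLo _ hx))
  -- trace comparison lemmas
  have tDeq : ∀ (c d : M l) (y z : A), y - z ∈ Lo →
      τ (y * D l c d) = τ (z * D l c d) := by
    intro c d y z h
    have h0 := tD c d _ h
    rw [sub_mul, map_sub] at h0
    exact sub_eq_zero.mp h0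
  have tCeq : ∀ (a b : M l) (y z : A), y - z ∈ Hi →
      τ (C l a b * y) = τ (C l a b * z) := by
    intro a b y z h
    have h0 := tC a b _ h
    rw [mul_sub, map_sub] at h0
    exact sub_eq_zero.mp h0
  have tD2 : ∀ (e f a b : M l) (y z : A), y - z ∈ Lo →
      τ (y * (D l e f * C l a b)) = τ (z * (D l e f * C l a b)) := by
    intro e f a b y z h
    have h0 : τ ((y - z) * (D l e f * C l a b)) = 0 := by
      rw [← mul_assoc, hτtr, ← mul_assoc]
      exact tD e f _ (leftI _ _ h)
    rw [sub_mul, map_sub] at h0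
    exact sub_eq_zero.mp h0
  -- evaluated duality
  have tCD : ∀ (a b c d : M l), τ (C l a b * D l c d)
      = if a = d ∧ b = c then 1 else 0 := by
    intro a b c d
    have hiff : ((⟨l, (a, b)⟩ : (x : Λ) × (M x × M x)) = ⟨l, (d, c)⟩) ↔ (a = d ∧ b = c) := by
      constructor
      · intro h
        have h2 := (Sigma.mk.inj_iff.mp h).2
        rw [heq_eq_eq, Prod.mk.injEq] at h2
        exact h2
      · rintro ⟨rfl, rfl⟩; rfl
    rw [hdual]
    simp only [hiff]
  -- value of the structure constants of D acting on C
  have r_val : ∀ (e f x a : M l), r (D l e f) l x a = if a = f then Ψ l x e else 0 := by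
    intro e f x a
    have w1 : τ (C l a x * (D l x x * D l e f)) = if a = f then Ψ l x e else 0 := by
      rw [tCeq a x _ _ (hΨ l x x e f)]
      rw [mul_smul_comm, map_smul, tCD, smul_eq_mul]
      by_cases h : a = f <;> simp [h]
    have w2 : τ (C l a x * (D l x x * D l e f)) = r (D l e f) l x a := by
      rw [← mul_assoc, hτtr, ← mul_assoc]
      rw [tDeq x x _ _ (hC3 (D l e f) l a x)]
      rw [Finset.sum_mul, map_sum]
      simp only [smul_mul_assoc, map_smul, tCD, smul_eq_mul]
      simp
    rw [← w2, w1]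
  -- symmetry of Φ
  have phi_symm : ∀ (S T : M l), Φ l S T = Φ l T S := by
    intro S T
    have m1 : ι (C l S S * C l T T - Φ l S T • C l S T) ∈ Lo := iotaLo _ (hΦ l S S T T)
    have hι1 : ι (C l S S * C l T T - Φ l S T • C l S T)
        = ι (C l T T) * ι (C l S S) - Φ l S T • ι (C l S T) := by
      rw [map_sub, map_smul, hιmul]
    rw [hι1] at m1
    have hmem : (Φ l T S - Φ l S T) • C l T S ∈ Lo := by
      have hrw : (Φ l T S - Φ l S T) • C l T S =
          (ι (C l T T) * ι (C l S S) - Φ l S T • ι (C l S T))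
          - (ι (C l T T) - C l T T) * ι (C l S S)
          - C l T T * (ι (C l S S) - C l S S)
          - (C l T T * C l S S - Φ l T S • C l T S)
          + Φ l S T • (ι (C l S T) - C l T S) := by
        simp only [sub_mul, mul_sub, smul_sub, sub_smul]
        abel
      rw [hrw]
      exact Submodule.add_mem _
        (Submodule.sub_mem _
          (Submodule.sub_mem _
            (Submodule.sub_mem _ m1 (rightI _ _ (hC2 l T T)))
            (leftI _ _ (hC2 l S S)))
          (hΦ l T T S S))
        (Submodule.smul_mem _ _ (hC2 l S T))
    have hco : bC.coord ⟨l, (T, S)⟩ ((Φ l T S - Φ l S T) • C l T S) = 0 := by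
      have hle : Lo ≤ LinearMap.ker (bC.coord ⟨l, (T, S)⟩) := by
        rw [hLo, Submodule.span_le]
        rintro y ⟨m, U, V, hm, rfl⟩
        simp only [SetLike.mem_coe, LinearMap.mem_ker]
        rw [← hbC m U V, Module.Basis.coord_apply, Module.Basis.repr_self, Finsupp.single_apply, if_neg]
        exact fun h => (ne_of_lt hm) (congrArg Sigma.fst h)
      exact hle hmem
    rw [map_smul, ← hbC l T S, Module.Basis.coord_apply, Module.Basis.repr_self, Finsupp.single_apply,
      if_pos rfl, smul_eq_mul, mul_one] at hco
    exact (sub_eq_zero.mp hco).symm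
  -- key identity
  have key : ∀ (p e : M l), ∑ X : M l, Φ l p X * Ψ l X e = if p = e then k l else 0 := by
    intro p e
    have EA : τ (((C l p p * D l e p) * C l p p) * D l p p)
        = ∑ X : M l, Φ l p X * Ψ l X e := by
      rw [mul_assoc (C l p p) (D l e p) (C l p p)]
      have hw : C l p p * (D l e p * C l p p)
          - C l p p * (∑ X, r (D l e p) l X p • C l X p) ∈ Lo := by
        rw [← mul_sub]
        exact leftI _ _ (hC3 (D l e p) l p p)
      rw [tDeq p p _ _ hw, Finset.mul_sum, Finset.sum_mul, map_sum]
      refine Finset.sum_congr rfl fun X _ => ?_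
      rw [mul_smul_comm, smul_mul_assoc, map_smul, smul_eq_mul]
      have hin : τ ((C l p p * C l X p) * D l p p) = Φ l p X := by
        rw [tDeq p p _ _ (hΦ l p p X p), smul_mul_assoc, map_smul, tCD, smul_eq_mul]
        simp
      rw [hin, r_val]
      simp [mul_comm]
    have EB : τ (((C l p p * D l e p) * C l p p) * D l p p)
        = if p = e then ∑ X : M l, Φ l p X * Ψ l X p else 0 := by
      rw [hτtr]
      rw [show D l p p * ((C l p p * D l e p) * C l p p)
          = (D l p p * C l p p) * (D l e p * C l p p) by
        noncomm_ring]
      rw [tD2 e p p p _ _ (hC3 (D l p p) l p p)]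
      rw [Finset.sum_mul, map_sum]
      have hin : ∀ X : M l, τ (C l X p * (D l e p * C l p p))
          = Φ l p X * (if p = e then 1 else 0) := by
        intro X
        rw [← mul_assoc, hτtr, ← mul_assoc]
        rw [tDeq e p _ _ (hΦ l p p X p), smul_mul_assoc, map_smul, tCD, smul_eq_mul]
        by_cases h : p = e <;> simp [h]
      have : ∀ X : M l, τ ((r (D l p p) l X p • C l X p) * (D l e p * C l p p))
          = Ψ l X p * (Φ l p X * (if p = e then 1 else 0)) := by
        intro X
        rw [smul_mul_assoc, map_smul, smul_eq_mul, hin, r_val]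
        simp
      rw [Finset.sum_congr rfl fun X _ => this X]
      by_cases h : p = e
      · simp only [if_pos h]
        exact Finset.sum_congr rfl fun X _ => by ring
      · simp [h]
    rw [← EA, EB]
    by_cases h : p = e
    · subst h
      simp only [if_pos rfl]
      rw [← hk l p]
      exact Finset.sum_congr rfl fun X _ => by rw [phi_symm p X]
    · rw [if_neg h, if_neg h]
  -- conclusion
  have hU : ∃ U : M l, v U ≠ 0 := by
    by_contra h
    push_neg at h
    exact hv0 (funext fun x => h x)
  obtain ⟨U, hU⟩ := hU
  have hfinal : v U * k l = 0 := by
    calc v U * k l = ∑ S : M l, v S * (if S = U then k l else 0) := by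
          rw [Finset.sum_congr rfl fun S _ => by
            rw [mul_ite, mul_zero]]
          rw [Finset.sum_ite_eq' Finset.univ U (fun S => v S * k l)]
          simp
      _ = ∑ S : M l, v S * ∑ T : M l, Φ l S T * Ψ l T U := by
          exact Finset.sum_congr rfl fun S _ => by rw [key S U]
      _ = ∑ T : M l, (∑ S : M l, v S * Φ l S T) * Ψ l T U := by
          simp only [Finset.mul_sum, Finset.sum_mul]
          rw [Finset.sum_comm]
          exact Finset.sum_congr rfl fun T _ => Finset.sum_congr rfl fun S _ => by ring
      _ = 0 := by simp [hv]
  rcases mul_eq_zero.mp hfinal with h | h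
  · exact absurd h hU
  · exact h
end

section
/- Let A be a symmetric cellular algebra and λ ∈ Λ. The R-span I^λ of the elements C^λ_{S,V} D^λ_{V,U} (for S, U ∈ M(λ) and any fixed V) is a two-sided ideal of A. -/
set_option linter.unusedSectionVars false

namespace SpanCDAux

variable {R A : Type*} [CommRing R] [Ring A] [Algebra R A]
variable {Λ : Type*} [PartialOrder Λ] [Fintype Λ] [DecidableEq Λ]
variable {M : Λ → Type*} [∀ l, Fintype (M l)] [∀ l, DecidableEq (M l)]

/-- The `bD`-coordinates of `z` are traces against the `C` basis. -/
theorem coord (C D : ∀ l, M l → M l → A) (τ : A →ₗ[R] R)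
    (bD : Module.Basis ((l : Λ) × (M l × M l)) R A)
    (hbD : ∀ l S T, bD ⟨l, (S, T)⟩ = D l S T)
    (hdual : ∀ l m (S T : M l) (U V : M m),
      τ (C l S T * D m U V) =
        if (⟨l, (S, T)⟩ : (l : Λ) × (M l × M l)) = ⟨m, (V, U)⟩ then 1 else 0)
    (z : A) (n : Λ) (X Y : M n) :
    τ (C n Y X * z) = bD.repr z ⟨n, (X, Y)⟩ := by
  have h : (τ.comp (LinearMap.mulLeft R (C n Y X)))
      = (Finsupp.lapply (⟨n, (X, Y)⟩ : (l : Λ) × (M l × M l))).comp bD.repr.toLinearMap := by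
    apply bD.ext
    rintro ⟨m, U, V⟩
    simp only [LinearMap.comp_apply, LinearMap.mulLeft_apply,
      LinearEquiv.coe_coe, Module.Basis.repr_self, Finsupp.lapply_apply, Finsupp.single_apply]
    rw [hbD, hdual]
    by_cases hnm : n = m
    · subst hnm
      simp [Sigma.mk.inj_iff, Prod.ext_iff, eq_comm, and_comm]
    · rw [if_neg (fun he => hnm (congrArg Sigma.fst he)),
        if_neg (fun he => hnm (congrArg Sigma.fst he).symm)]
  exact LinearMap.congr_fun h z

/-- Traces of lower-cell elements against `D l` vanish when all lower cells avoid `l`. -/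
theorem tau_lower (C D : ∀ l, M l → M l → A) (τ : A →ₗ[R] R)
    (hdual : ∀ l m (S T : M l) (U V : M m),
      τ (C l S T * D m U V) =
        if (⟨l, (S, T)⟩ : (l : Λ) × (M l × M l)) = ⟨m, (V, U)⟩ then 1 else 0)
    {n l : Λ} (hnl : ∀ m' : Λ, m' < n → m' ≠ l) (V U : M l)
    {w : A} (hw : w ∈ Submodule.span R {x | ∃ m, ∃ P Q : M m, m < n ∧ x = C m P Q}) :
    τ (w * D l V U) = 0 := by
  have hle : Submodule.span R {x | ∃ m, ∃ P Q : M m, m < n ∧ x = C m P Q} ≤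
      LinearMap.ker (τ.comp (LinearMap.mulRight R (D l V U))) := by
    rw [Submodule.span_le]
    rintro x ⟨m, P, Q, hmn, rfl⟩
    simp only [SetLike.mem_coe, LinearMap.mem_ker, LinearMap.comp_apply,
      LinearMap.mulRight_apply]
    rw [hdual]
    exact if_neg (fun he => hnl m hmn (congrArg Sigma.fst he))
  exact hle hw

/-- Orthogonality: `C m _ _ * D l _ _ = 0` when `m < l`. -/
theorem orth (C D : ∀ l, M l → M l → A) (τ : A →ₗ[R] R)
    (bD : Module.Basis ((l : Λ) × (M l × M l)) R A)
    (hbD : ∀ l S T, bD ⟨l, (S, T)⟩ = D l S T)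
    (hdual : ∀ l m (S T : M l) (U V : M m),
      τ (C l S T * D m U V) =
        if (⟨l, (S, T)⟩ : (l : Λ) × (M l × M l)) = ⟨m, (V, U)⟩ then 1 else 0)
    (r : A → ∀ l, M l → M l → R)
    (hC3 : ∀ (a : A) l (S T : M l), a * C l S T - ∑ S', r a l S' S • C l S' T ∈
      Submodule.span R {x | ∃ m, ∃ U V : M m, m < l ∧ x = C m U V})
    {m l : Λ} (hml : m < l) (P Q : M m) (V U : M l) :
    C m P Q * D l V U = 0 := by
  refine bD.ext_elem fun i => ?_
  obtain ⟨p, P', Q'⟩ := i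
  rw [map_zero, Finsupp.zero_apply, ← coord C D τ bD hbD hdual]
  have hw0 : τ ((C p Q' P' * C m P Q - ∑ P'', r (C p Q' P') m P'' P • C m P'' Q)
      * D l V U) = 0 :=
    tau_lower C D τ hdual (fun m' hm' => ne_of_lt (hm'.trans hml)) V U
      (hC3 (C p Q' P') m P Q)
  have hsplit : C p Q' P' * C m P Q
      = (C p Q' P' * C m P Q - ∑ P'', r (C p Q' P') m P'' P • C m P'' Q)
        + ∑ P'', r (C p Q' P') m P'' P • C m P'' Q := by abel
  rw [← mul_assoc, hsplit, add_mul, map_add, hw0, zero_add, Finset.sum_mul, map_sum]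
  refine Finset.sum_eq_zero fun P'' _ => ?_
  rw [smul_mul_assoc, map_smul, hdual,
    if_neg (fun he => (ne_of_lt hml) (congrArg Sigma.fst he)), smul_zero]

end SpanCDAux

/-- Lemma 4.1: the span of the elements `C l S V * D l V U` is a two-sided ideal of `A`. -/
theorem span_CD_is_ideal
    {R A : Type*} [CommRing R] [Ring A] [Algebra R A]
    {Λ : Type*} [PartialOrder Λ] [Fintype Λ] [DecidableEq Λ]
    {M : Λ → Type*} [∀ l, Fintype (M l)] [∀ l, DecidableEq (M l)]
    (C D : ∀ l, M l → M l → A)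
    (bC : Module.Basis ((l : Λ) × (M l × M l)) R A)
    (hbC : ∀ l S T, bC ⟨l, (S, T)⟩ = C l S T)
    (ι : A →ₗ[R] A)
    (hι2 : ∀ x, ι (ι x) = x)
    (hιmul : ∀ x y, ι (x * y) = ι y * ι x)
    (hC2 : ∀ l (S T : M l), ι (C l S T) - C l T S ∈
      Submodule.span R {x | ∃ m, ∃ U V : M m, m < l ∧ x = C m U V})
    (r : A → ∀ l, M l → M l → R)
    (hC3 : ∀ (a : A) l (S T : M l), a * C l S T - ∑ S', r a l S' S • C l S' T ∈
      Submodule.span R {x | ∃ m, ∃ U V : M m, m < l ∧ x = C m U V})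
    (τ : A →ₗ[R] R)
    (hτtr : ∀ x y, τ (x * y) = τ (y * x))
    (bD : Module.Basis ((l : Λ) × (M l × M l)) R A)
    (hbD : ∀ l S T, bD ⟨l, (S, T)⟩ = D l S T)
    (hdual : ∀ l m (S T : M l) (U V : M m),
      τ (C l S T * D m U V) =
        if (⟨l, (S, T)⟩ : (l : Λ) × (M l × M l)) = ⟨m, (V, U)⟩ then 1 else 0)
     :
    ∀ l, ∀ a : A, ∀ x ∈ Submodule.span R
        {x : A | ∃ S U V : M l, x = C l S V * D l V U},
      a * x ∈ Submodule.span R {x : A | ∃ S U V : M l, x = C l S V * D l V U} ∧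
      x * a ∈ Submodule.span R {x : A | ∃ S U V : M l, x = C l S V * D l V U} := by
  intro l a x hx
  induction hx using Submodule.span_induction with
  | zero => exact ⟨by simpa using Submodule.zero_mem _, by simpa using Submodule.zero_mem _⟩
  | add x y hx hy ihx ihy =>
      exact ⟨by rw [mul_add]; exact Submodule.add_mem _ ihx.1 ihy.1,
        by rw [add_mul]; exact Submodule.add_mem _ ihx.2 ihy.2⟩
  | smul c x hx ih =>
      exact ⟨by rw [mul_smul_comm]; exact Submodule.smul_mem _ _ ih.1,
        by rw [smul_mul_assoc]; exact Submodule.smul_mem _ _ ih.2⟩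
  | mem x hxmem =>
      obtain ⟨S0, U, V, rfl⟩ := hxmem
      constructor
      · -- left multiplication
        have hwD : (a * C l S0 V - ∑ S', r a l S' S0 • C l S' V) * D l V U = 0 := by
          have hle : Submodule.span R {x | ∃ m, ∃ P Q : M m, m < l ∧ x = C m P Q} ≤
              LinearMap.ker (LinearMap.mulRight R (D l V U)) := by
            rw [Submodule.span_le]
            rintro x ⟨m, P, Q, hml, rfl⟩
            simpa using SpanCDAux.orth C D τ bD hbD hdual r hC3 hml P Q V U
          exact hle (hC3 a l S0 V)
        have hmul : a * (C l S0 V * D l V U) = ∑ S', r a l S' S0 • (C l S' V * D l V U) := by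
          have hsplit : a * C l S0 V = (a * C l S0 V - ∑ S', r a l S' S0 • C l S' V)
              + ∑ S', r a l S' S0 • C l S' V := by abel
          rw [← mul_assoc, hsplit, add_mul, hwD, zero_add, Finset.sum_mul]
          exact Finset.sum_congr rfl fun S' _ => smul_mul_assoc _ _ _
        rw [hmul]
        exact Submodule.sum_mem _ fun S' _ =>
          Submodule.smul_mem _ _ (Submodule.subset_span ⟨S', U, V, rfl⟩)
      · -- right multiplication
        set h := D l V U * a - ∑ Y, r a l U Y • D l V Y with hh
        have coords : ∀ n (X Y : M n), ¬ l < n → bD.repr h ⟨n, (X, Y)⟩ = 0 := by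
          intro n X Y hln
          rw [← SpanCDAux.coord C D τ bD hbD hdual]
          have e1 : C n Y X * h = C n Y X * (D l V U * a)
              - ∑ Y', r a l U Y' • (C n Y X * D l V Y') := by
            rw [hh, mul_sub, Finset.mul_sum]
            congr 1
            exact Finset.sum_congr rfl fun Y' _ => mul_smul_comm _ _ _
          rw [e1, map_sub, map_sum]
          have e2 : τ (C n Y X * (D l V U * a)) = τ ((a * C n Y X) * D l V U) := by
            rw [← mul_assoc, hτtr (C n Y X * D l V U) a, ← mul_assoc]
          have hwD2 : τ ((a * C n Y X - ∑ Y'', r a n Y'' Y • C n Y'' X) * D l V U) = 0 :=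
            SpanCDAux.tau_lower C D τ hdual (fun m' hm' he => hln (by rwa [he] at hm')) V U
              (hC3 a n Y X)
          have hsplit2 : a * C n Y X = (a * C n Y X - ∑ Y'', r a n Y'' Y • C n Y'' X)
              + ∑ Y'', r a n Y'' Y • C n Y'' X := by abel
          rw [e2, hsplit2, add_mul, map_add, hwD2, zero_add, Finset.sum_mul, map_sum]
          by_cases hnl : n = l
          · subst hnl
            simp only [smul_mul_assoc, map_smul, hdual, smul_eq_mul,
              Sigma.mk.inj_iff, heq_eq_eq, Prod.mk.injEq, true_and]
            by_cases hXV : X = V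
            · subst hXV
              simp [Finset.sum_ite_eq, Finset.sum_ite_eq', mul_ite, eq_comm]
            · simp [hXV]
          · have h1 : ∀ Y'' : M n,
                ((⟨n, (Y'', X)⟩ : (l : Λ) × (M l × M l)) = ⟨l, (U, V)⟩) = False :=
              fun Y'' => eq_false (fun he => hnl (congrArg Sigma.fst he))
            have h2 : ∀ Y' : M l,
                ((⟨n, (Y, X)⟩ : (l : Λ) × (M l × M l)) = ⟨l, (Y', V)⟩) = False :=
              fun Y' => eq_false (fun he => hnl (congrArg Sigma.fst he))
            simp [smul_mul_assoc, hdual, h1, h2]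
        have hCh : C l S0 V * h = 0 := by
          conv_lhs => rw [← bD.sum_repr h, Finset.mul_sum]
          refine Finset.sum_eq_zero ?_
          rintro ⟨n, X, Y⟩ _
          rw [mul_smul_comm]
          by_cases hln : l < n
          · rw [hbD, SpanCDAux.orth C D τ bD hbD hdual r hC3 hln S0 V X Y, smul_zero]
          · rw [coords n X Y hln, zero_smul]
        have hmul2 : (C l S0 V * D l V U) * a = ∑ Y, r a l U Y • (C l S0 V * D l V Y) := by
          have hsplit3 : D l V U * a = h + ∑ Y, r a l U Y • D l V Y := by rw [hh]; abel
          rw [mul_assoc, hsplit3, mul_add, hCh, zero_add, Finset.mul_sum]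
          exact Finset.sum_congr rfl fun Y _ => mul_smul_comm _ _ _
        rw [hmul2]
        exact Submodule.sum_mem _ fun Y _ =>
          Submodule.smul_mem _ _ (Submodule.subset_span ⟨S0, Y, V, rfl⟩)
end

section
/- Let A be a symmetric cellular algebra over an integral domain R and let I^Λ = Σ_{λ: k_λ = 0} I^λ, where I^λ is the ideal spanned by elements C^λ_{S,V} D^λ_{V,U}. Then (I^Λ)² = 0. -/
set_option linter.unusedSectionVars false

section Aux

variable {R A : Type*} [CommRing R] [Ring A] [Algebra R A]
    {Λ : Type*} [PartialOrder Λ] [Fintype Λ] [DecidableEq Λ]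
    {M : Λ → Type*} [∀ l, Fintype (M l)] [∀ l, DecidableEq (M l)]
    {C D : ∀ l, M l → M l → A}
    {bC bD : Module.Basis ((l : Λ) × (M l × M l)) R A}
    {ι : A →ₗ[R] A} {r : A → ∀ l, M l → M l → R}
    {τ : A →ₗ[R] R}
    {Φ Ψ : ∀ l, M l → M l → R}

lemma sigma_eq_iff {l : Λ} {S T P Q : M l} :
    ((⟨l, (S, T)⟩ : (l : Λ) × (M l × M l)) = ⟨l, (P, Q)⟩) ↔ S = P ∧ T = Q := by
  constructor
  · intro h
    have h2 := (Sigma.mk.inj_iff.mp h).2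
    rw [heq_eq_eq, Prod.mk.injEq] at h2
    exact h2
  · rintro ⟨rfl, rfl⟩; rfl

lemma sigma_ne_of_fst_ne {l m : Λ} {ST : M l × M l} {UV : M m × M m} (h : l ≠ m) :
    (⟨l, ST⟩ : (l : Λ) × (M l × M l)) ≠ ⟨m, UV⟩ :=
  fun hc => h (congrArg Sigma.fst hc)

lemma sigma_flip {p m : Λ} {P Q : M p} {U V : M m} :
    ((⟨p, (P, Q)⟩ : (l : Λ) × (M l × M l)) = ⟨m, (V, U)⟩) ↔
      ((⟨m, (U, V)⟩ : (l : Λ) × (M l × M l)) = ⟨p, (Q, P)⟩) := by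
  constructor <;> intro h
  · obtain rfl : p = m := congrArg Sigma.fst h
    rw [sigma_eq_iff] at h ⊢
    exact ⟨h.2.symm, h.1.symm⟩
  · obtain rfl : m = p := congrArg Sigma.fst h
    rw [sigma_eq_iff] at h ⊢
    exact ⟨h.2.symm, h.1.symm⟩

lemma L_reprC
    (hbC : ∀ l S T, bC ⟨l, (S, T)⟩ = C l S T)
    (hdual : ∀ l m (S T : M l) (U V : M m),
      τ (C l S T * D m U V) =
        if (⟨l, (S, T)⟩ : (l : Λ) × (M l × M l)) = ⟨m, (V, U)⟩ then 1 else 0)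
    (x : A) (p : Λ) (P Q : M p) :
    τ (x * D p P Q) = bC.repr x ⟨p, (Q, P)⟩ := by
  conv_lhs => rw [← bC.sum_repr x]
  rw [Finset.sum_mul, map_sum]
  simp_rw [smul_mul_assoc, map_smul, smul_eq_mul]
  rw [Finset.sum_eq_single (⟨p, (Q, P)⟩ : (l : Λ) × (M l × M l))]
  · rw [hbC, hdual, if_pos rfl, mul_one]
  · rintro ⟨m, U, V⟩ - hne
    rw [hbC, hdual, if_neg hne, mul_zero]
  · intro h; exact absurd (Finset.mem_univ _) h

lemma L_reprD
    (hbD : ∀ l S T, bD ⟨l, (S, T)⟩ = D l S T)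
    (hdual : ∀ l m (S T : M l) (U V : M m),
      τ (C l S T * D m U V) =
        if (⟨l, (S, T)⟩ : (l : Λ) × (M l × M l)) = ⟨m, (V, U)⟩ then 1 else 0)
    (x : A) (p : Λ) (P Q : M p) :
    τ (C p P Q * x) = bD.repr x ⟨p, (Q, P)⟩ := by
  conv_lhs => rw [← bD.sum_repr x]
  rw [Finset.mul_sum, map_sum]
  simp_rw [mul_smul_comm, map_smul, smul_eq_mul]
  rw [Finset.sum_eq_single (⟨p, (Q, P)⟩ : (l : Λ) × (M l × M l))]
  · rw [hbD, hdual, if_pos (sigma_flip.mpr rfl), mul_one]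
  · rintro ⟨m, U, V⟩ - hne
    rw [hbD, hdual, if_neg (fun hc => hne (sigma_flip.mp hc)), mul_zero]
  · intro h; exact absurd (Finset.mem_univ _) h

lemma L_zeroD
    (hbD : ∀ l S T, bD ⟨l, (S, T)⟩ = D l S T)
    (hdual : ∀ l m (S T : M l) (U V : M m),
      τ (C l S T * D m U V) =
        if (⟨l, (S, T)⟩ : (l : Λ) × (M l × M l)) = ⟨m, (V, U)⟩ then 1 else 0)
    (x : A) (h : ∀ p (P Q : M p), τ (C p P Q * x) = 0) : x = 0 := by
  apply bD.ext_elem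
  rintro ⟨m, U, V⟩
  rw [map_zero, Finsupp.coe_zero, Pi.zero_apply,
    ← L_reprD hbD hdual x m V U, h]

lemma L_tauLow
    (hdual : ∀ l m (S T : M l) (U V : M m),
      τ (C l S T * D m U V) =
        if (⟨l, (S, T)⟩ : (l : Λ) × (M l × M l)) = ⟨m, (V, U)⟩ then 1 else 0)
    {l m : Λ} (hm : ¬ m < l) (U V : M m) {y : A}
    (hy : y ∈ Submodule.span R {x | ∃ p, ∃ P Q : M p, p < l ∧ x = C p P Q}) :
    τ (y * D m U V) = 0 := by
  induction hy using Submodule.span_induction with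
  | mem x hx =>
    obtain ⟨p, P, Q, hpl, rfl⟩ := hx
    rw [hdual, if_neg]
    intro hc
    have hc' : p = m := congrArg Sigma.fst hc
    exact hm (hc' ▸ hpl)
  | zero => rw [zero_mul, map_zero]
  | add a b _ _ iha ihb => rw [add_mul, map_add, iha, ihb, add_zero]
  | smul c a _ ih => rw [smul_mul_assoc, map_smul, ih, smul_zero]

lemma L_mulLow
    (hC3 : ∀ (a : A) l (S T : M l), a * C l S T - ∑ S', r a l S' S • C l S' T ∈
      Submodule.span R {x | ∃ m, ∃ U V : M m, m < l ∧ x = C m U V})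
    (l : Λ) (a : A) {y : A}
    (hy : y ∈ Submodule.span R {x | ∃ p, ∃ P Q : M p, p < l ∧ x = C p P Q}) :
    a * y ∈ Submodule.span R {x | ∃ p, ∃ P Q : M p, p < l ∧ x = C p P Q} := by
  induction hy using Submodule.span_induction with
  | mem x hx =>
    obtain ⟨p, P, Q, hpl, rfl⟩ := hx
    rw [show a * C p P Q = (a * C p P Q - ∑ S', r a p S' P • C p S' Q)
        + ∑ S', r a p S' P • C p S' Q from (sub_add_cancel _ _).symm]
    refine add_mem ?_ (Submodule.sum_mem _ fun S' _ => Submodule.smul_mem _ _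
      (Submodule.subset_span ⟨p, S', Q, hpl, rfl⟩))
    refine Submodule.span_mono ?_ (hC3 a p P Q)
    rintro z ⟨q, Uq, Vq, hq, rfl⟩
    exact ⟨q, Uq, Vq, hq.trans hpl, rfl⟩
  | zero => rw [mul_zero]; exact Submodule.zero_mem _
  | add x y _ _ ihx ihy => rw [mul_add]; exact add_mem ihx ihy
  | smul c x _ ih => rw [mul_smul_comm]; exact Submodule.smul_mem _ _ ih

lemma L_iotaLow
    (hC2 : ∀ l (S T : M l), ι (C l S T) - C l T S ∈
      Submodule.span R {x | ∃ m, ∃ U V : M m, m < l ∧ x = C m U V})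
    (l : Λ) {y : A}
    (hy : y ∈ Submodule.span R {x | ∃ p, ∃ P Q : M p, p < l ∧ x = C p P Q}) :
    ι y ∈ Submodule.span R {x | ∃ p, ∃ P Q : M p, p < l ∧ x = C p P Q} := by
  induction hy using Submodule.span_induction with
  | mem x hx =>
    obtain ⟨p, P, Q, hpl, rfl⟩ := hx
    rw [show ι (C p P Q) = (ι (C p P Q) - C p Q P) + C p Q P from
      (sub_add_cancel _ _).symm]
    refine add_mem ?_ (Submodule.subset_span ⟨p, Q, P, hpl, rfl⟩)
    refine Submodule.span_mono ?_ (hC2 p P Q)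
    rintro z ⟨q, Uq, Vq, hq, rfl⟩
    exact ⟨q, Uq, Vq, hq.trans hpl, rfl⟩
  | zero => rw [map_zero]; exact Submodule.zero_mem _
  | add x y _ _ ihx ihy => rw [map_add]; exact add_mem ihx ihy
  | smul c x _ ih => rw [map_smul]; exact Submodule.smul_mem _ _ ih

lemma L_lowMul
    (hι2 : ∀ x, ι (ι x) = x)
    (hιmul : ∀ x y, ι (x * y) = ι y * ι x)
    (hC2 : ∀ l (S T : M l), ι (C l S T) - C l T S ∈
      Submodule.span R {x | ∃ m, ∃ U V : M m, m < l ∧ x = C m U V})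
    (hC3 : ∀ (a : A) l (S T : M l), a * C l S T - ∑ S', r a l S' S • C l S' T ∈
      Submodule.span R {x | ∃ m, ∃ U V : M m, m < l ∧ x = C m U V})
    (l : Λ) (a : A) {y : A}
    (hy : y ∈ Submodule.span R {x | ∃ p, ∃ P Q : M p, p < l ∧ x = C p P Q}) :
    y * a ∈ Submodule.span R {x | ∃ p, ∃ P Q : M p, p < l ∧ x = C p P Q} := by
  have h : y * a = ι (ι a * ι y) := by rw [hιmul, hι2, hι2]
  rw [h]
  exact L_iotaLow hC2 l (L_mulLow hC3 l (ι a) (L_iotaLow hC2 l hy))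

lemma L_CD0
    (hbD : ∀ l S T, bD ⟨l, (S, T)⟩ = D l S T)
    (hdual : ∀ l m (S T : M l) (U V : M m),
      τ (C l S T * D m U V) =
        if (⟨l, (S, T)⟩ : (l : Λ) × (M l × M l)) = ⟨m, (V, U)⟩ then 1 else 0)
    (hC3 : ∀ (a : A) l (S T : M l), a * C l S T - ∑ S', r a l S' S • C l S' T ∈
      Submodule.span R {x | ∃ m, ∃ U V : M m, m < l ∧ x = C m U V})
    (l : Λ) (S V : M l) (ν : Λ) (hν : ¬ ν ≤ l) (X Y : M ν) :
    C l S V * D ν X Y = 0 := by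
  apply L_zeroD hbD hdual
  intro p P Q
  rw [← mul_assoc]
  rw [show C p P Q * C l S V = (C p P Q * C l S V - ∑ S', r (C p P Q) l S' S • C l S' V)
      + ∑ S', r (C p P Q) l S' S • C l S' V from (sub_add_cancel _ _).symm]
  rw [add_mul, map_add, L_tauLow hdual (fun h => hν h.le) X Y (hC3 _ l S V), zero_add,
    Finset.sum_mul, map_sum]
  refine Finset.sum_eq_zero fun S' _ => ?_
  rw [smul_mul_assoc, map_smul, smul_eq_mul, hdual,
    if_neg (sigma_ne_of_fst_ne (fun h => hν (le_of_eq h.symm))), mul_zero]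

lemma L_CHiD
    (hbD : ∀ l S T, bD ⟨l, (S, T)⟩ = D l S T)
    (hdual : ∀ l m (S T : M l) (U V : M m),
      τ (C l S T * D m U V) =
        if (⟨l, (S, T)⟩ : (l : Λ) × (M l × M l)) = ⟨m, (V, U)⟩ then 1 else 0)
    (hC3 : ∀ (a : A) l (S T : M l), a * C l S T - ∑ S', r a l S' S • C l S' T ∈
      Submodule.span R {x | ∃ m, ∃ U V : M m, m < l ∧ x = C m U V})
    (l : Λ) (S V : M l) {h : A}
    (hh : h ∈ Submodule.span R {x | ∃ m, ∃ P Q : M m, l < m ∧ x = D m P Q}) :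
    C l S V * h = 0 := by
  induction hh using Submodule.span_induction with
  | mem x hx =>
    obtain ⟨ν, X, Y, hlt, rfl⟩ := hx
    exact L_CD0 hbD hdual hC3 l S V ν (fun hle => absurd (lt_of_lt_of_le hlt hle) (lt_irrefl l)) X Y
  | zero => rw [mul_zero]
  | add x y _ _ ihx ihy => rw [mul_add, ihx, ihy, add_zero]
  | smul c x _ ih => rw [mul_smul_comm, ih, smul_zero]

lemma L_rtau
    (hdual : ∀ l m (S T : M l) (U V : M m),
      τ (C l S T * D m U V) =
        if (⟨l, (S, T)⟩ : (l : Λ) × (M l × M l)) = ⟨m, (V, U)⟩ then 1 else 0)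
    (hC3 : ∀ (a : A) l (S T : M l), a * C l S T - ∑ S', r a l S' S • C l S' T ∈
      Submodule.span R {x | ∃ m, ∃ U V : M m, m < l ∧ x = C m U V})
    (a : A) (l : Λ) (P Q X : M l) :
    r a l P Q = τ (a * (C l Q X * D l X P)) := by
  rw [← mul_assoc]
  rw [show a * C l Q X = (a * C l Q X - ∑ S', r a l S' Q • C l S' X)
      + ∑ S', r a l S' Q • C l S' X from (sub_add_cancel _ _).symm]
  rw [add_mul, map_add, L_tauLow hdual (lt_irrefl l) X P (hC3 a l Q X), zero_add,
    Finset.sum_mul, map_sum]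
  rw [Finset.sum_eq_single P]
  · rw [smul_mul_assoc, map_smul, smul_eq_mul, hdual, if_pos rfl, mul_one]
  · intro S' _ hne
    rw [smul_mul_assoc, map_smul, smul_eq_mul, hdual, if_neg, mul_zero]
    intro hc; exact hne (sigma_eq_iff.mp hc).1
  · intro hP; exact absurd (Finset.mem_univ _) hP

lemma L_L1
    (hbD : ∀ l S T, bD ⟨l, (S, T)⟩ = D l S T)
    (hdual : ∀ l m (S T : M l) (U V : M m),
      τ (C l S T * D m U V) =
        if (⟨l, (S, T)⟩ : (l : Λ) × (M l × M l)) = ⟨m, (V, U)⟩ then 1 else 0)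
    (hτtr : ∀ x y, τ (x * y) = τ (y * x))
    (hC3 : ∀ (a : A) l (S T : M l), a * C l S T - ∑ S', r a l S' S • C l S' T ∈
      Submodule.span R {x | ∃ m, ∃ U V : M m, m < l ∧ x = C m U V})
    (a : A) (l : Λ) (V U : M l) :
    D l V U * a - ∑ Y, r a l U Y • D l V Y ∈
      Submodule.span R {x | ∃ m, ∃ P Q : M m, l < m ∧ x = D m P Q} := by
  set w := D l V U * a - ∑ Y, r a l U Y • D l V Y with hw
  have hrep : ∀ (ν : Λ) (X Y : M ν), ¬ l < ν → τ (C ν Y X * w) = 0 := by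
    intro ν X Y hν
    rw [hw, mul_sub, map_sub]
    have e1 : τ (C ν Y X * (D l V U * a)) = τ ((a * C ν Y X) * D l V U) := by
      rw [← mul_assoc, hτtr (C ν Y X * D l V U) a, ← mul_assoc]
    rw [e1]
    rw [show a * C ν Y X = (a * C ν Y X - ∑ Y2, r a ν Y2 Y • C ν Y2 X)
        + ∑ Y2, r a ν Y2 Y • C ν Y2 X from (sub_add_cancel _ _).symm]
    rw [add_mul, map_add, L_tauLow hdual hν V U (hC3 a ν Y X), zero_add,
      Finset.sum_mul, map_sum, Finset.mul_sum, map_sum]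
    simp_rw [smul_mul_assoc, mul_smul_comm, map_smul, smul_eq_mul, hdual]
    by_cases hνl : ν = l
    · subst hνl
      have s1 : (∑ Y2, r a ν Y2 Y *
          (if (⟨ν, (Y2, X)⟩ : (l : Λ) × (M l × M l)) = ⟨ν, (U, V)⟩ then 1 else 0))
          = if X = V then r a ν U Y else 0 := by
        by_cases hXV : X = V
        · subst hXV
          rw [if_pos rfl, Finset.sum_eq_single U]
          · rw [if_pos rfl, mul_one]
          · intro b _ hb
            rw [if_neg (fun hc => hb (sigma_eq_iff.mp hc).1), mul_zero]
          · intro hU; exact absurd (Finset.mem_univ _) hU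
        · rw [if_neg hXV]
          refine Finset.sum_eq_zero fun b _ => ?_
          rw [if_neg (fun hc => hXV (sigma_eq_iff.mp hc).2), mul_zero]
      have s2 : (∑ Y', r a ν U Y' *
          (if (⟨ν, (Y, X)⟩ : (l : Λ) × (M l × M l)) = ⟨ν, (Y', V)⟩ then 1 else 0))
          = if X = V then r a ν U Y else 0 := by
        by_cases hXV : X = V
        · subst hXV
          rw [if_pos rfl, Finset.sum_eq_single Y]
          · rw [if_pos rfl, mul_one]
          · intro b _ hb
            rw [if_neg (fun hc => hb (sigma_eq_iff.mp hc).1.symm), mul_zero]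
          · intro hY; exact absurd (Finset.mem_univ _) hY
        · rw [if_neg hXV]
          refine Finset.sum_eq_zero fun b _ => ?_
          rw [if_neg (fun hc => hXV (sigma_eq_iff.mp hc).2), mul_zero]
      rw [s1, s2, sub_self]
    · rw [Finset.sum_eq_zero (fun Y2 _ => by
        rw [if_neg (sigma_ne_of_fst_ne hνl), mul_zero]),
        Finset.sum_eq_zero (fun Y' _ => by
        rw [if_neg (sigma_ne_of_fst_ne hνl), mul_zero]), sub_self]
  have h2 : w = ∑ i : (l' : Λ) × (M l' × M l'), bD.repr w i • bD i := (bD.sum_repr w).symm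
  rw [h2]
  refine Submodule.sum_mem _ fun i _ => ?_
  obtain ⟨ν, X, Y⟩ := i
  by_cases hlt : l < ν
  · exact Submodule.smul_mem _ _ (Submodule.subset_span ⟨ν, X, Y, hlt, hbD ν X Y⟩)
  · rw [show bD.repr w ⟨ν, (X, Y)⟩ = τ (C ν Y X * w) from (L_reprD hbD hdual w ν Y X).symm,
      hrep ν X Y hlt, zero_smul]
    exact Submodule.zero_mem _

lemma L_L1pp
    (hι2 : ∀ x, ι (ι x) = x)
    (hιmul : ∀ x y, ι (x * y) = ι y * ι x)
    (hC2 : ∀ l (S T : M l), ι (C l S T) - C l T S ∈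
      Submodule.span R {x | ∃ m, ∃ U V : M m, m < l ∧ x = C m U V})
    (hC3 : ∀ (a : A) l (S T : M l), a * C l S T - ∑ S', r a l S' S • C l S' T ∈
      Submodule.span R {x | ∃ m, ∃ U V : M m, m < l ∧ x = C m U V})
    (l : Λ) (Y X : M l) (b : A) :
    C l Y X * b - ∑ X', r (ι b) l X' X • C l Y X' ∈
      Submodule.span R {x | ∃ m, ∃ U V : M m, m < l ∧ x = C m U V} := by
  have h4 : ι (C l Y X * b) - ∑ S', r (ι b) l S' X • C l S' Y ∈
      Submodule.span R {x | ∃ m, ∃ U V : M m, m < l ∧ x = C m U V} := by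
    rw [hιmul]
    have hsplit : ι b * ι (C l Y X) - ∑ S', r (ι b) l S' X • C l S' Y
        = (ι b * C l X Y - ∑ S', r (ι b) l S' X • C l S' Y)
          + ι b * (ι (C l Y X) - C l X Y) := by
      rw [mul_sub]; abel
    rw [hsplit]
    exact add_mem (hC3 (ι b) l X Y) (L_mulLow hC3 l (ι b) (hC2 l Y X))
  have h5 := L_iotaLow hC2 l h4
  rw [map_sub, hι2, map_sum] at h5
  simp_rw [map_smul] at h5
  have h6 : (∑ S', r (ι b) l S' X • (ι (C l S' Y) - C l Y S')) ∈
      Submodule.span R {x | ∃ m, ∃ U V : M m, m < l ∧ x = C m U V} :=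
    Submodule.sum_mem _ fun S' _ => Submodule.smul_mem _ _ (hC2 l S' Y)
  have hsplit2 : C l Y X * b - ∑ X', r (ι b) l X' X • C l Y X'
      = (C l Y X * b - ∑ S', r (ι b) l S' X • ι (C l S' Y))
        + ∑ S', r (ι b) l S' X • (ι (C l S' Y) - C l Y S') := by
    simp_rw [smul_sub]
    rw [Finset.sum_sub_distrib]
    abel
  rw [hsplit2]
  exact add_mem h5 h6

lemma L_rC0
    (hι2 : ∀ x, ι (ι x) = x)
    (hιmul : ∀ x y, ι (x * y) = ι y * ι x)
    (hC2 : ∀ l (S T : M l), ι (C l S T) - C l T S ∈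
      Submodule.span R {x | ∃ m, ∃ U V : M m, m < l ∧ x = C m U V})
    (hC3 : ∀ (a : A) l (S T : M l), a * C l S T - ∑ S', r a l S' S • C l S' T ∈
      Submodule.span R {x | ∃ m, ∃ U V : M m, m < l ∧ x = C m U V})
    (hdual : ∀ l m (S T : M l) (U V : M m),
      τ (C l S T * D m U V) =
        if (⟨l, (S, T)⟩ : (l : Λ) × (M l × M l)) = ⟨m, (V, U)⟩ then 1 else 0)
    (l m : Λ) (hml : ¬ m ≤ l) (Y X : M l) (P Q : M m) :
    r (C l Y X) m P Q = 0 := by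
  rw [L_rtau hdual hC3 (C l Y X) m P Q Q, ← mul_assoc]
  rw [show C l Y X * C m Q Q = (C l Y X * C m Q Q - ∑ X', r (ι (C m Q Q)) l X' X • C l Y X')
      + ∑ X', r (ι (C m Q Q)) l X' X • C l Y X' from (sub_add_cancel _ _).symm]
  rw [add_mul, map_add, L_tauLow hdual (fun h => hml h.le) Q P
    (L_L1pp hι2 hιmul hC2 hC3 l Y X _), zero_add, Finset.sum_mul, map_sum]
  refine Finset.sum_eq_zero fun X' _ => ?_
  rw [smul_mul_assoc, map_smul, smul_eq_mul, hdual,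
    if_neg (sigma_ne_of_fst_ne (fun h => hml (le_of_eq h.symm))), mul_zero]

lemma L_rCPhi
    (hdual : ∀ l m (S T : M l) (U V : M m),
      τ (C l S T * D m U V) =
        if (⟨l, (S, T)⟩ : (l : Λ) × (M l × M l)) = ⟨m, (V, U)⟩ then 1 else 0)
    (hC3 : ∀ (a : A) l (S T : M l), a * C l S T - ∑ S', r a l S' S • C l S' T ∈
      Submodule.span R {x | ∃ m, ∃ U V : M m, m < l ∧ x = C m U V})
    (hΦ : ∀ l (S T U V : M l), C l S T * C l U V - Φ l T U • C l S V ∈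
      Submodule.span R {x | ∃ m, ∃ U' V' : M m, m < l ∧ x = C m U' V'})
    (l : Λ) (Y X P Q : M l) :
    r (C l Y X) l P Q = if P = Y then Φ l X Q else 0 := by
  rw [L_rtau hdual hC3 (C l Y X) l P Q X, ← mul_assoc]
  rw [show C l Y X * C l Q X = (C l Y X * C l Q X - Φ l X Q • C l Y X) + Φ l X Q • C l Y X
      from (sub_add_cancel _ _).symm]
  rw [add_mul, map_add, L_tauLow hdual (lt_irrefl l) X P (hΦ l Y X Q X), zero_add,
    smul_mul_assoc, map_smul, smul_eq_mul, hdual]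
  by_cases h : P = Y
  · subst h; rw [if_pos rfl, if_pos rfl, mul_one]
  · rw [if_neg (fun hc => h (sigma_eq_iff.mp hc).1.symm), if_neg h, mul_zero]

lemma L_PhiSym
    (hι2 : ∀ x, ι (ι x) = x)
    (hιmul : ∀ x y, ι (x * y) = ι y * ι x)
    (hC2 : ∀ l (S T : M l), ι (C l S T) - C l T S ∈
      Submodule.span R {x | ∃ m, ∃ U V : M m, m < l ∧ x = C m U V})
    (hC3 : ∀ (a : A) l (S T : M l), a * C l S T - ∑ S', r a l S' S • C l S' T ∈
      Submodule.span R {x | ∃ m, ∃ U V : M m, m < l ∧ x = C m U V})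
    (hdual : ∀ l m (S T : M l) (U V : M m),
      τ (C l S T * D m U V) =
        if (⟨l, (S, T)⟩ : (l : Λ) × (M l × M l)) = ⟨m, (V, U)⟩ then 1 else 0)
    (hΦ : ∀ l (S T U V : M l), C l S T * C l U V - Φ l T U • C l S V ∈
      Submodule.span R {x | ∃ m, ∃ U' V' : M m, m < l ∧ x = C m U' V'})
    (l : Λ) (T U : M l) : Φ l T U = Φ l U T := by
  have h1 := hΦ l T T U U
  have h2 := L_iotaLow hC2 l h1
  rw [map_sub, map_smul, hιmul] at h2
  have h3 : C l U U * C l T T - Φ l T U • C l U T ∈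
      Submodule.span R {x | ∃ m, ∃ U' V' : M m, m < l ∧ x = C m U' V'} := by
    have expand : C l U U * C l T T - Φ l T U • C l U T
        = (ι (C l U U) * ι (C l T T) - Φ l T U • ι (C l T U))
          - (ι (C l U U) - C l U U) * ι (C l T T)
          - C l U U * (ι (C l T T) - C l T T)
          + Φ l T U • (ι (C l T U) - C l U T) := by
      rw [sub_mul, mul_sub, smul_sub]; abel
    rw [expand]
    exact add_mem (sub_mem (sub_mem h2
        (L_lowMul hι2 hιmul hC2 hC3 l (ι (C l T T)) (hC2 l U U)))
        (L_mulLow hC3 l (C l U U) (hC2 l T T)))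
      (Submodule.smul_mem _ _ (hC2 l T U))
  have h4 := hΦ l U U T T
  have h5 : (Φ l U T - Φ l T U) • C l U T ∈
      Submodule.span R {x | ∃ m, ∃ U' V' : M m, m < l ∧ x = C m U' V'} := by
    have e : (Φ l U T - Φ l T U) • C l U T
        = (C l U U * C l T T - Φ l T U • C l U T)
          - (C l U U * C l T T - Φ l U T • C l U T) := by
      rw [sub_smul]; abel
    rw [e]; exact sub_mem h3 h4
  have h6 := L_tauLow hdual (lt_irrefl l) T U h5
  rw [smul_mul_assoc, map_smul, smul_eq_mul, hdual, if_pos rfl, mul_one] at h6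
  exact (sub_eq_zero.mp h6).symm

lemma L_key
    (hbD : ∀ l S T, bD ⟨l, (S, T)⟩ = D l S T)
    (hι2 : ∀ x, ι (ι x) = x)
    (hιmul : ∀ x y, ι (x * y) = ι y * ι x)
    (hC2 : ∀ l (S T : M l), ι (C l S T) - C l T S ∈
      Submodule.span R {x | ∃ m, ∃ U V : M m, m < l ∧ x = C m U V})
    (hC3 : ∀ (a : A) l (S T : M l), a * C l S T - ∑ S', r a l S' S • C l S' T ∈
      Submodule.span R {x | ∃ m, ∃ U V : M m, m < l ∧ x = C m U V})
    (hτtr : ∀ x y, τ (x * y) = τ (y * x))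
    (hdual : ∀ l m (S T : M l) (U V : M m),
      τ (C l S T * D m U V) =
        if (⟨l, (S, T)⟩ : (l : Λ) × (M l × M l)) = ⟨m, (V, U)⟩ then 1 else 0)
    (hΦ : ∀ l (S T U V : M l), C l S T * C l U V - Φ l T U • C l S V ∈
      Submodule.span R {x | ∃ m, ∃ U' V' : M m, m < l ∧ x = C m U' V'})
    (hΨ : ∀ l (S T U V : M l), D l S T * D l U V - Ψ l T U • D l S V ∈
      Submodule.span R {x | ∃ m, ∃ U' V' : M m, l < m ∧ x = D m U' V'})
    {k : Λ → R}
    (hk : ∀ l (V : M l), ∑ X : M l, Φ l X V * Ψ l X V = k l)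
    (l m : Λ) (hkl : k l = 0)
    (S U V : M l) (S2 U2 V2 : M m) :
    (C l S V * D l V U) * (C m S2 V2 * D m V2 U2) = 0 := by
  have hr : ∀ Y : M l, r (C m S2 V2 * D m V2 U2) l U Y = 0 := by
    intro Y
    rw [L_rtau hdual hC3 _ l U Y V]
    by_cases hlm : l = m
    · subst hlm
      rw [show (C l S2 V2 * D l V2 U2) * (C l Y V * D l V U)
          = C l S2 V2 * ((D l V2 U2 * C l Y V) * D l V U) from by
        simp only [mul_assoc]]
      have hL := L_L1 hbD hdual hτtr hC3 (C l Y V) l V2 U2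
      rw [show D l V2 U2 * C l Y V
          = (∑ Y', r (C l Y V) l U2 Y' • D l V2 Y')
            + (D l V2 U2 * C l Y V - ∑ Y', r (C l Y V) l U2 Y' • D l V2 Y') from by abel]
      rw [add_mul, mul_add, map_add]
      have hz : C l S2 V2 * ((D l V2 U2 * C l Y V
          - ∑ Y', r (C l Y V) l U2 Y' • D l V2 Y') * D l V U) = 0 := by
        rw [← mul_assoc, L_CHiD hbD hdual hC3 l S2 V2 hL, zero_mul]
      rw [hz, map_zero, add_zero, Finset.sum_mul, Finset.mul_sum, map_sum]
      have hterm : ∀ Y' : M l,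
          τ (C l S2 V2 * ((r (C l Y V) l U2 Y' • D l V2 Y') * D l V U))
          = r (C l Y V) l U2 Y' * (Ψ l Y' V * (if S2 = U then 1 else 0)) := by
        intro Y'
        rw [smul_mul_assoc, mul_smul_comm, map_smul, smul_eq_mul]
        congr 1
        have hps := hΨ l V2 Y' V U
        rw [show D l V2 Y' * D l V U
            = Ψ l Y' V • D l V2 U + (D l V2 Y' * D l V U - Ψ l Y' V • D l V2 U) from by abel]
        rw [mul_add, map_add, L_CHiD hbD hdual hC3 l S2 V2 hps, map_zero, add_zero,
          mul_smul_comm, map_smul, smul_eq_mul, hdual]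
        congr 1
        by_cases hS2 : S2 = U
        · subst hS2; rw [if_pos rfl, if_pos rfl]
        · rw [if_neg (fun hc => hS2 (sigma_eq_iff.mp hc).1), if_neg hS2]
      simp only [hterm]
      simp_rw [L_rCPhi hdual hC3 hΦ l Y V]
      by_cases hU2 : U2 = Y
      · by_cases hS2 : S2 = U
        · simp only [if_pos hU2, if_pos hS2, mul_one]
          rw [Finset.sum_congr rfl (fun Y' _ => by
            rw [L_PhiSym hι2 hιmul hC2 hC3 hdual hΦ l V Y'])]
          rw [hk l V, hkl]
        · simp [hS2]
      · simp [hU2]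
    · by_cases hml : m ≤ l
      · have hlmle : ¬ l ≤ m := fun hh => hlm (le_antisymm hh hml)
        rw [hτtr]
        rw [show (C l Y V * D l V U) * (C m S2 V2 * D m V2 U2)
            = (C l Y V * (D l V U * C m S2 V2)) * D m V2 U2 from by simp only [mul_assoc]]
        have hL := L_L1 hbD hdual hτtr hC3 (C m S2 V2) l V U
        have hmem : D l V U * C m S2 V2 ∈
            Submodule.span R {x | ∃ p, ∃ P Q : M p, l < p ∧ x = D p P Q} := by
          have h0 : (∑ Y', r (C m S2 V2) l U Y' • D l V Y') = 0 := by
            refine Finset.sum_eq_zero fun Y' _ => ?_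
            rw [L_rC0 hι2 hιmul hC2 hC3 hdual m l hlmle S2 V2 U Y', zero_smul]
          rw [h0, sub_zero] at hL; exact hL
        rw [L_CHiD hbD hdual hC3 l Y V hmem, zero_mul, map_zero]
      · rw [show (C m S2 V2 * D m V2 U2) * (C l Y V * D l V U)
            = (C m S2 V2 * (D m V2 U2 * C l Y V)) * D l V U from by simp only [mul_assoc]]
        have hL := L_L1 hbD hdual hτtr hC3 (C l Y V) m V2 U2
        have hmem : D m V2 U2 * C l Y V ∈
            Submodule.span R {x | ∃ p, ∃ P Q : M p, m < p ∧ x = D p P Q} := by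
          have h0 : (∑ Y', r (C l Y V) m U2 Y' • D m V2 Y') = 0 := by
            refine Finset.sum_eq_zero fun Y' _ => ?_
            rw [L_rC0 hι2 hιmul hC2 hC3 hdual l m hml Y V U2 Y', zero_smul]
          rw [h0, sub_zero] at hL; exact hL
        rw [L_CHiD hbD hdual hC3 m S2 V2 hmem, zero_mul, map_zero]
  have hL := L_L1 hbD hdual hτtr hC3 (C m S2 V2 * D m V2 U2) l V U
  have hmem : D l V U * (C m S2 V2 * D m V2 U2) ∈
      Submodule.span R {x | ∃ p, ∃ P Q : M p, l < p ∧ x = D p P Q} := by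
    have h0 : (∑ Y, r (C m S2 V2 * D m V2 U2) l U Y • D l V Y) = 0 := by
      refine Finset.sum_eq_zero fun Y _ => ?_
      rw [hr Y, zero_smul]
    rw [h0, sub_zero] at hL; exact hL
  rw [mul_assoc]
  exact L_CHiD hbD hdual hC3 l S V hmem
end Aux

/-- Part of Theorem 4.2(1): `(I^Λ)² = 0`, where `I^Λ` is the sum over all `l` with
`k l = 0` of the ideals spanned by the elements `C l S V * D l V U`. -/
theorem I_Lambda_squared_zero
    {R A : Type*} [CommRing R] [Ring A] [Algebra R A]
    {Λ : Type*} [PartialOrder Λ] [Fintype Λ] [DecidableEq Λ]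
    {M : Λ → Type*} [∀ l, Fintype (M l)] [∀ l, DecidableEq (M l)]
    (C D : ∀ l, M l → M l → A)
    (bC : Module.Basis ((l : Λ) × (M l × M l)) R A)
    (hbC : ∀ l S T, bC ⟨l, (S, T)⟩ = C l S T)
    (ι : A →ₗ[R] A)
    (hι2 : ∀ x, ι (ι x) = x)
    (hιmul : ∀ x y, ι (x * y) = ι y * ι x)
    (hC2 : ∀ l (S T : M l), ι (C l S T) - C l T S ∈
      Submodule.span R {x | ∃ m, ∃ U V : M m, m < l ∧ x = C m U V})
    (r : A → ∀ l, M l → M l → R)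
    (hC3 : ∀ (a : A) l (S T : M l), a * C l S T - ∑ S', r a l S' S • C l S' T ∈
      Submodule.span R {x | ∃ m, ∃ U V : M m, m < l ∧ x = C m U V})
    (τ : A →ₗ[R] R)
    (hτtr : ∀ x y, τ (x * y) = τ (y * x))
    (bD : Module.Basis ((l : Λ) × (M l × M l)) R A)
    (hbD : ∀ l S T, bD ⟨l, (S, T)⟩ = D l S T)
    (hdual : ∀ l m (S T : M l) (U V : M m),
      τ (C l S T * D m U V) =
        if (⟨l, (S, T)⟩ : (l : Λ) × (M l × M l)) = ⟨m, (V, U)⟩ then 1 else 0)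
    (Φ Ψ : ∀ l, M l → M l → R)
    (hΦ : ∀ l (S T U V : M l), C l S T * C l U V - Φ l T U • C l S V ∈
      Submodule.span R {x | ∃ m, ∃ U' V' : M m, m < l ∧ x = C m U' V'})
    (hΨ : ∀ l (S T U V : M l), D l S T * D l U V - Ψ l T U • D l S V ∈
      Submodule.span R {x | ∃ m, ∃ U' V' : M m, l < m ∧ x = D m U' V'})
    [IsDomain R]
    (k : Λ → R)
    (hk : ∀ l (V : M l), ∑ X : M l, Φ l X V * Ψ l X V = k l) :
    ∀ x ∈ (⨆ l ∈ {l : Λ | k l = 0},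
        Submodule.span R {x : A | ∃ S U V : M l, x = C l S V * D l V U}),
      ∀ y ∈ (⨆ l ∈ {l : Λ | k l = 0},
        Submodule.span R {x : A | ∃ S U V : M l, x = C l S V * D l V U}),
      x * y = 0 := by
  intro x hx y hy
  have hsub : (⨆ l ∈ {l : Λ | k l = 0},
      Submodule.span R {x : A | ∃ S U V : M l, x = C l S V * D l V U})
      ≤ Submodule.span R {x : A | ∃ l, k l = 0 ∧ ∃ S U V : M l, x = C l S V * D l V U} := by
    refine iSup_le fun l => iSup_le fun hl => Submodule.span_le.mpr ?_
    rintro z ⟨S, U, V, rfl⟩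
    exact Submodule.subset_span ⟨l, hl, S, U, V, rfl⟩
  have hx' := hsub hx
  have hy' := hsub hy
  clear hx hy
  induction hx' using Submodule.span_induction with
  | mem g hg =>
    obtain ⟨l, hkl, S, U, V, rfl⟩ := hg
    induction hy' using Submodule.span_induction with
    | mem g2 hg2 =>
      obtain ⟨m, _, S2, U2, V2, rfl⟩ := hg2
      exact L_key hbD hι2 hιmul hC2 hC3 hτtr hdual hΦ hΨ hk l m hkl S U V S2 U2 V2
    | zero => rw [mul_zero]
    | add a b _ _ iha ihb => rw [mul_add, iha, ihb, add_zero]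
    | smul c a _ ih => rw [mul_smul_comm, ih, smul_zero]
  | zero => rw [zero_mul]
  | add a b _ _ iha ihb => rw [add_mul, iha, ihb, add_zero]
  | smul c a _ ih => rw [smul_mul_assoc, ih, smul_zero]
end

section
/- Let A be a symmetric cellular algebra over an integral domain R. Define I = I^Λ + I_D^Λ, where I^Λ = Σ_{k_λ=0} span{C^λ_{S,V}D^λ_{V,U}} and I_D^Λ = Σ_{k_λ=0} span{D^λ_{U,V}C^λ_{V,S}}. Then I³ = 0; in particular I ⊆ rad A. -/
private lemma map_span_zero {R A B : Type*} [CommRing R] [AddCommGroup A] [Module R A]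
    [AddCommGroup B] [Module R B] (f : A →ₗ[R] B) {s : Set A}
    (h : ∀ g ∈ s, f g = 0) {x : A} (hx : x ∈ Submodule.span R s) : f x = 0 := by
  have hle : Submodule.span R s ≤ LinearMap.ker f :=
    Submodule.span_le.mpr fun g hg => LinearMap.mem_ker.mpr (h g hg)
  exact LinearMap.mem_ker.mp (hle hx)

private lemma mul_span_zero {R A : Type*} [CommRing R] [Ring A] [Algebra R A] {s : Set A}
    {c : A} (h : ∀ g ∈ s, c * g = 0) {x : A} (hx : x ∈ Submodule.span R s) : c * x = 0 := by
  have := map_span_zero (LinearMap.mulLeft R c) (by simpa using h) hx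
  simpa using this

private lemma span_mul_zero {R A : Type*} [CommRing R] [Ring A] [Algebra R A] {s : Set A}
    {c : A} (h : ∀ g ∈ s, g * c = 0) {x : A} (hx : x ∈ Submodule.span R s) : x * c = 0 := by
  have := map_span_zero (LinearMap.mulRight R c) (by simpa using h) hx
  simpa using this

private lemma mem_span_of_repr_zero {R A ι : Type*} [CommRing R] [AddCommGroup A] [Module R A]
    (b : Module.Basis ι R A) {s : Set ι} {x : A} (h : ∀ i, i ∉ s → b.repr x i = 0)
    {t : Set A} (hst : ∀ i ∈ s, b i ∈ t) : x ∈ Submodule.span R t := by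
  have hx : x ∈ Submodule.span R (b '' s) := by
    rw [Module.Basis.mem_span_image]
    intro i hi
    by_contra hns
    exact (Finsupp.mem_support_iff.mp hi) (h i hns)
  refine Submodule.span_mono ?_ hx
  rintro y ⟨i, hi, rfl⟩
  exact hst i hi

private lemma eq_zero_of_repr_zero {R A ι : Type*} [CommRing R] [AddCommGroup A] [Module R A]
    (b : Module.Basis ι R A) {x : A} (h : ∀ i, b.repr x i = 0) : x = 0 := by
  have : b.repr x = 0 := Finsupp.ext h
  exact b.repr.map_eq_zero_iff.mp this

private def genSet {Λ : Type*} {M : Λ → Type*} {A : Type*}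
    (E : ∀ l, M l → M l → A) (p : Λ → Prop) : Set A :=
  {x | ∃ m, ∃ U V : M m, p m ∧ x = E m U V}

set_option maxHeartbeats 2000000 in
/-- Theorem 4.2(1): with `I = I^Λ + I_D^Λ` (sums over `l` with `k l = 0` of the spans
of the `C*D` and `D*C` products), one has `I³ = 0`; in particular `I` is contained in
the Jacobson radical of `A`. -/
theorem I_cubed_zero_and_in_radical
    {R A : Type*} [CommRing R] [Ring A] [Algebra R A]
    {Λ : Type*} [PartialOrder Λ] [Fintype Λ] [DecidableEq Λ]
    {M : Λ → Type*} [∀ l, Fintype (M l)] [∀ l, DecidableEq (M l)]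
    (C D : ∀ l, M l → M l → A)
    (bC : Module.Basis ((l : Λ) × (M l × M l)) R A)
    (hbC : ∀ l S T, bC ⟨l, (S, T)⟩ = C l S T)
    (ι : A →ₗ[R] A)
    (hι2 : ∀ x, ι (ι x) = x)
    (hιmul : ∀ x y, ι (x * y) = ι y * ι x)
    (hC2 : ∀ l (S T : M l), ι (C l S T) - C l T S ∈
      Submodule.span R {x | ∃ m, ∃ U V : M m, m < l ∧ x = C m U V})
    (r : A → ∀ l, M l → M l → R)
    (hC3 : ∀ (a : A) l (S T : M l), a * C l S T - ∑ S', r a l S' S • C l S' T ∈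
      Submodule.span R {x | ∃ m, ∃ U V : M m, m < l ∧ x = C m U V})
    (τ : A →ₗ[R] R)
    (hτtr : ∀ x y, τ (x * y) = τ (y * x))
    (bD : Module.Basis ((l : Λ) × (M l × M l)) R A)
    (hbD : ∀ l S T, bD ⟨l, (S, T)⟩ = D l S T)
    (hdual : ∀ l m (S T : M l) (U V : M m),
      τ (C l S T * D m U V) =
        if (⟨l, (S, T)⟩ : (l : Λ) × (M l × M l)) = ⟨m, (V, U)⟩ then 1 else 0)
    (Φ Ψ : ∀ l, M l → M l → R)
    (hΦ : ∀ l (S T U V : M l), C l S T * C l U V - Φ l T U • C l S V ∈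
      Submodule.span R {x | ∃ m, ∃ U' V' : M m, m < l ∧ x = C m U' V'})
    (hΨ : ∀ l (S T U V : M l), D l S T * D l U V - Ψ l T U • D l S V ∈
      Submodule.span R {x | ∃ m, ∃ U' V' : M m, l < m ∧ x = D m U' V'})
    [IsDomain R]
    (k : Λ → R)
    (hk : ∀ l (V : M l), ∑ X : M l, Φ l X V * Ψ l X V = k l) :
    ∀ I : Submodule R A,
      I = (⨆ l ∈ {l : Λ | k l = 0},
            Submodule.span R {x : A | ∃ S U V : M l, x = C l S V * D l V U}) +
          (⨆ l ∈ {l : Λ | k l = 0},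
            Submodule.span R {x : A | ∃ S U V : M l, x = D l U V * C l V S}) →
      (∀ x ∈ I, ∀ y ∈ I, ∀ z ∈ I, x * y * z = 0) ∧
      (∀ x ∈ I, x ∈ Ideal.jacobson (⊥ : Ideal A)) := by
  classical
  -- Sigma index equality helpers
  have hij : ∀ (l : Λ) (p q : M l × M l),
      ((⟨l, p⟩ : (l : Λ) × (M l × M l)) = ⟨l, q⟩) ↔ p = q := by
    intro l p q
    constructor
    · intro h
      exact eq_of_heq (Sigma.mk.inj_iff.mp h).2
    · intro h; rw [h]
  have hij' : ∀ {l m : Λ} (p : M l × M l) (q : M m × M m), l ≠ m →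
      ¬ ((⟨l, p⟩ : (l : Λ) × (M l × M l)) = ⟨m, q⟩) :=
    fun p q hne h => hne (congrArg Sigma.fst h)
  -- representation formulas
  have hreprD : ∀ (x : A) (b : (l : Λ) × (M l × M l)),
      bD.repr x b = τ (C b.1 b.2.2 b.2.1 * x) := by
    intro x b
    have h : (Finsupp.lapply b ∘ₗ (bD.repr : A →ₗ[R] _)) =
        τ ∘ₗ LinearMap.mulLeft R (C b.1 b.2.2 b.2.1) := by
      apply bD.ext
      rintro ⟨m, U, V⟩
      obtain ⟨l, S, T⟩ := b
      simp only [LinearMap.coe_comp, Function.comp_apply, Finsupp.lapply_apply,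
        LinearMap.mulLeft_apply, LinearEquiv.coe_coe]
      rw [Module.Basis.repr_self_apply, hbD, hdual]
      by_cases hlm : l = m
      · subst hlm
        simp only [hij, Prod.mk.injEq]
        exact if_congr (by constructor <;> rintro ⟨rfl, rfl⟩ <;> exact ⟨rfl, rfl⟩) rfl rfl
      · rw [if_neg (hij' _ _ (fun h => hlm h.symm)), if_neg (hij' _ _ hlm)]
    have := congrArg (fun f => f x) (congrArg DFunLike.coe h)
    simpa using this
  have hreprC : ∀ (x : A) (b : (l : Λ) × (M l × M l)),
      bC.repr x b = τ (x * D b.1 b.2.2 b.2.1) := by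
    intro x b
    have h : (Finsupp.lapply b ∘ₗ (bC.repr : A →ₗ[R] _)) =
        τ ∘ₗ LinearMap.mulRight R (D b.1 b.2.2 b.2.1) := by
      apply bC.ext
      rintro ⟨m, U, V⟩
      obtain ⟨l, S, T⟩ := b
      simp only [LinearMap.coe_comp, Function.comp_apply, Finsupp.lapply_apply,
        LinearMap.mulRight_apply, LinearEquiv.coe_coe]
      rw [Module.Basis.repr_self_apply, hbC, hdual]
    have := congrArg (fun f => f x) (congrArg DFunLike.coe h)
    simpa using this
  -- τ vanishing lemmas
  have hτL : ∀ (ν l : Λ), ¬ l < ν → ∀ (U V : M l), ∀ {y : A},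
      y ∈ Submodule.span R (genSet C (· < ν)) → τ (y * D l U V) = 0 := by
    intro ν l hlt U V y hy
    have := map_span_zero (τ ∘ₗ LinearMap.mulRight R (D l U V)) ?_ hy
    · simpa using this
    · rintro g ⟨m, X, Y, hm, rfl⟩
      simp only [LinearMap.coe_comp, Function.comp_apply, LinearMap.mulRight_apply]
      rw [hdual, if_neg]
      intro h
      have hml : m = l := congrArg Sigma.fst h
      exact hlt (hml ▸ hm)
  have hτH : ∀ (ν l : Λ), ¬ ν < l → ∀ (S Q : M l), ∀ {h : A},
      h ∈ Submodule.span R (genSet D (ν < ·)) → τ (C l Q S * h) = 0 := by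
    intro ν l hlt S Q h hh
    have := map_span_zero (τ ∘ₗ LinearMap.mulLeft R (C l Q S)) ?_ hh
    · simpa using this
    · rintro g ⟨m, X, Y, hm, rfl⟩
      simp only [LinearMap.coe_comp, Function.comp_apply, LinearMap.mulLeft_apply]
      rw [hdual, if_neg]
      intro h2
      have hml : l = m := congrArg Sigma.fst h2
      exact hlt (by rw [hml]; exact hm)
  -- monotonicity of generated spans
  have hmono : ∀ (E : ∀ l, M l → M l → A) (p q : Λ → Prop), (∀ m, p m → q m) →
      Submodule.span R (genSet E p) ≤ Submodule.span R (genSet E q) := by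
    intro E p q hpq
    apply Submodule.span_mono
    rintro x ⟨m, U, V, hm, rfl⟩
    exact ⟨m, U, V, hpq m hm, rfl⟩
  -- the lower C-span is a left ideal
  have hLleft : ∀ (ν : Λ) (a : A), ∀ {y : A}, y ∈ Submodule.span R (genSet C (· < ν)) →
      a * y ∈ Submodule.span R (genSet C (· < ν)) := by
    intro ν a y hy
    have hle : Submodule.span R (genSet C (· < ν)) ≤
        (Submodule.span R (genSet C (· < ν))).comap (LinearMap.mulLeft R a) := by
      rw [Submodule.span_le]
      rintro g ⟨m, X, Y, hm, rfl⟩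
      simp only [SetLike.mem_coe, Submodule.mem_comap, LinearMap.mulLeft_apply]
      have heq : a * C m X Y = (a * C m X Y - ∑ S', r a m S' X • C m S' Y) +
          ∑ S', r a m S' X • C m S' Y := by abel
      rw [heq]
      refine Submodule.add_mem _ (hmono C (· < m) (· < ν) (fun m' hm' => hm'.trans hm) (hC3 a m X Y)) ?_
      exact Submodule.sum_mem _ fun S' _ =>
        Submodule.smul_mem _ _ (Submodule.subset_span ⟨m, S', Y, hm, rfl⟩)
    simpa using hle hy
  -- ι preserves the lower C-span
  have hιLower : ∀ (ν : Λ), ∀ {y : A}, y ∈ Submodule.span R (genSet C (· < ν)) →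
      ι y ∈ Submodule.span R (genSet C (· < ν)) := by
    intro ν y hy
    have hle : Submodule.span R (genSet C (· < ν)) ≤
        (Submodule.span R (genSet C (· < ν))).comap ι := by
      rw [Submodule.span_le]
      rintro g ⟨m, X, Y, hm, rfl⟩
      simp only [SetLike.mem_coe, Submodule.mem_comap]
      have heq : ι (C m X Y) = (ι (C m X Y) - C m Y X) + C m Y X := by abel
      rw [heq]
      refine Submodule.add_mem _ (hmono C (· < m) (· < ν) (fun m' hm' => hm'.trans hm) (hC2 m X Y)) ?_
      exact Submodule.subset_span ⟨m, Y, X, hm, rfl⟩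
    exact hle hy
  -- right multiplication on the cellular basis
  have hRC : ∀ (l : Λ) (S T : M l) (a : A),
      C l S T * a - ∑ T', r (ι a) l T' T • C l S T' ∈
        Submodule.span R (genSet C (· < l)) := by
    intro l S T a
    have h1 : C l S T * a = ι (ι a * ι (C l S T)) := by rw [hιmul, hι2, hι2]
    have hwL : (ι a * C l T S - ∑ T', r (ι a) l T' T • C l T' S) +
        ι a * (ι (C l S T) - C l T S) ∈ Submodule.span R (genSet C (· < l)) :=
      Submodule.add_mem _ (hC3 (ι a) l T S) (hLleft l (ι a) (hC2 l S T))
    have h4 : ι a * ι (C l S T) = (∑ T', r (ι a) l T' T • C l T' S) +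
        ((ι a * C l T S - ∑ T', r (ι a) l T' T • C l T' S) +
          ι a * (ι (C l S T) - C l T S)) := by
      rw [mul_sub]; abel
    have h5 : C l S T * a = (∑ T', r (ι a) l T' T • ι (C l T' S)) +
        ι ((ι a * C l T S - ∑ T', r (ι a) l T' T • C l T' S) +
          ι a * (ι (C l S T) - C l T S)) := by
      rw [h1, h4, map_add, map_sum]
      simp only [map_smul]
    have h6 : C l S T * a - ∑ T', r (ι a) l T' T • C l S T' =
        (∑ T', r (ι a) l T' T • (ι (C l T' S) - C l S T')) +
        ι ((ι a * C l T S - ∑ T', r (ι a) l T' T • C l T' S) +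
          ι a * (ι (C l S T) - C l T S)) := by
      rw [h5]
      simp only [smul_sub, Finset.sum_sub_distrib]
      abel
    rw [h6]
    exact Submodule.add_mem _
      (Submodule.sum_mem _ fun T' _ => Submodule.smul_mem _ _ (hC2 l T' S))
      (hιLower l hwL)
  -- right multiplication on the dual basis
  have hLemR : ∀ (l : Λ) (U V : M l) (a : A),
      D l U V * a - ∑ Q, r a l V Q • D l U Q ∈ Submodule.span R (genSet D (l < ·)) := by
    intro l U V a
    refine mem_span_of_repr_zero bD (s := {b : (l : Λ) × (M l × M l) | l < b.1}) ?_ ?_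
    · rintro ⟨ν, P, Q⟩ hν
      simp only [Set.mem_setOf_eq] at hν
      rw [map_sub, Finsupp.sub_apply, hreprD]
      have e1 : τ (C ν Q P * (D l U V * a)) = τ ((a * C ν Q P) * D l U V) := by
        rw [← mul_assoc, hτtr, ← mul_assoc]
      have e2 : τ ((∑ Q', r a ν Q' Q • C ν Q' P) * D l U V) =
          ∑ Q', r a ν Q' Q *
            (if (⟨ν, (Q', P)⟩ : (l : Λ) × (M l × M l)) = ⟨l, (V, U)⟩ then 1 else 0) := by
        rw [Finset.sum_mul, map_sum]
        refine Finset.sum_congr rfl fun Q' _ => ?_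
        rw [smul_mul_assoc, map_smul, smul_eq_mul, hdual]
      have e3 : τ ((a * C ν Q P - ∑ Q', r a ν Q' Q • C ν Q' P) * D l U V) = 0 :=
        hτL ν l hν U V (hC3 a ν Q P)
      have EL : τ (C ν Q P * (D l U V * a)) =
          ∑ Q', r a ν Q' Q *
            (if (⟨ν, (Q', P)⟩ : (l : Λ) × (M l × M l)) = ⟨l, (V, U)⟩ then 1 else 0) := by
        rw [e1, show (a * C ν Q P) = (∑ Q', r a ν Q' Q • C ν Q' P) +
          (a * C ν Q P - ∑ Q', r a ν Q' Q • C ν Q' P) by abel, add_mul, map_add, e2, e3, add_zero]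
      have ER : (bD.repr (∑ Q', r a l V Q' • D l U Q')) ⟨ν, (P, Q)⟩ =
          ∑ Q', r a l V Q' *
            (if (⟨l, (U, Q')⟩ : (l : Λ) × (M l × M l)) = ⟨ν, (P, Q)⟩ then 1 else 0) := by
        rw [map_sum, Finsupp.finset_sum_apply]
        refine Finset.sum_congr rfl fun Q' _ => ?_
        rw [map_smul, Finsupp.smul_apply, smul_eq_mul, ← hbD, Module.Basis.repr_self_apply]
      rw [EL, ER]
      by_cases hνl : ν = l
      · subst hνl
        simp only [hij, Prod.mk.injEq, mul_ite, mul_one, mul_zero]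
        by_cases hPU : P = U
        · subst hPU
          simp
        · rw [Finset.sum_eq_zero fun Q' _ => by rw [if_neg (by tauto)],
            Finset.sum_eq_zero fun Q' _ => by rw [if_neg (by tauto)], sub_zero]
      · rw [Finset.sum_eq_zero fun Q' _ => by
            rw [if_neg (hij' _ _ hνl), mul_zero],
          Finset.sum_eq_zero fun Q' _ => by
            rw [if_neg (hij' _ _ fun h => hνl h.symm), mul_zero], sub_zero]
    · rintro ⟨m, X, Y⟩ hm
      exact ⟨m, X, Y, hm, (hbD m X Y)⟩
  -- left multiplication on the dual basis
  have hLemLD : ∀ (l : Λ) (U V : M l) (a : A),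
      a * D l U V - ∑ P, r (ι a) l U P • D l P V ∈ Submodule.span R (genSet D (l < ·)) := by
    intro l U V a
    refine mem_span_of_repr_zero bD (s := {b : (l : Λ) × (M l × M l) | l < b.1}) ?_ ?_
    · rintro ⟨ν, P, Q⟩ hν
      simp only [Set.mem_setOf_eq] at hν
      rw [map_sub, Finsupp.sub_apply, hreprD]
      have e1 : τ (C ν Q P * (a * D l U V)) = τ ((C ν Q P * a) * D l U V) := by
        rw [← mul_assoc]
      have e2 : τ ((∑ P', r (ι a) ν P' P • C ν Q P') * D l U V) =
          ∑ P', r (ι a) ν P' P *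
            (if (⟨ν, (Q, P')⟩ : (l : Λ) × (M l × M l)) = ⟨l, (V, U)⟩ then 1 else 0) := by
        rw [Finset.sum_mul, map_sum]
        refine Finset.sum_congr rfl fun P' _ => ?_
        rw [smul_mul_assoc, map_smul, smul_eq_mul, hdual]
      have e3 : τ ((C ν Q P * a - ∑ P', r (ι a) ν P' P • C ν Q P') * D l U V) = 0 :=
        hτL ν l hν U V (hRC ν Q P a)
      have EL : τ (C ν Q P * (a * D l U V)) =
          ∑ P', r (ι a) ν P' P *
            (if (⟨ν, (Q, P')⟩ : (l : Λ) × (M l × M l)) = ⟨l, (V, U)⟩ then 1 else 0) := by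
        rw [e1, show (C ν Q P * a) = (∑ P', r (ι a) ν P' P • C ν Q P') +
          (C ν Q P * a - ∑ P', r (ι a) ν P' P • C ν Q P') by abel, add_mul, map_add, e2, e3,
          add_zero]
      have ER : (bD.repr (∑ P', r (ι a) l U P' • D l P' V)) ⟨ν, (P, Q)⟩ =
          ∑ P', r (ι a) l U P' *
            (if (⟨l, (P', V)⟩ : (l : Λ) × (M l × M l)) = ⟨ν, (P, Q)⟩ then 1 else 0) := by
        rw [map_sum, Finsupp.finset_sum_apply]
        refine Finset.sum_congr rfl fun P' _ => ?_
        rw [map_smul, Finsupp.smul_apply, smul_eq_mul, ← hbD, Module.Basis.repr_self_apply]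
      rw [EL, ER]
      by_cases hνl : ν = l
      · subst hνl
        simp only [hij, Prod.mk.injEq, mul_ite, mul_one, mul_zero]
        by_cases hQV : Q = V
        · subst hQV
          simp
        · rw [Finset.sum_eq_zero fun P' _ => by rw [if_neg (by tauto)],
            Finset.sum_eq_zero fun P' _ => by rw [if_neg (by tauto)], sub_zero]
      · rw [Finset.sum_eq_zero fun P' _ => by
            rw [if_neg (hij' _ _ hνl), mul_zero],
          Finset.sum_eq_zero fun P' _ => by
            rw [if_neg (hij' _ _ fun h => hνl h.symm), mul_zero], sub_zero]
    · rintro ⟨m, X, Y⟩ hm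
      exact ⟨m, X, Y, hm, (hbD m X Y)⟩
  -- orthogonality: C^l * D^m = 0 unless m ≤ l
  have hO1 : ∀ (l m : Λ), ¬ m ≤ l → ∀ (S T : M l) (U V : M m), C l S T * D m U V = 0 := by
    intro l m hml S T U V
    have hne : ∀ (ν : Λ) (p : M ν × M ν) (q : M m × M m), ν ≠ m → True := fun _ _ _ _ => trivial
    refine eq_zero_of_repr_zero bD fun b => ?_
    obtain ⟨ν, P, Q⟩ := b
    rw [hreprD, ← mul_assoc]
    have hlm : l ≠ m := fun h => hml (le_of_eq h.symm)
    have e2 : τ ((∑ S', r (C ν Q P) l S' S • C l S' T) * D m U V) = 0 := by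
      rw [Finset.sum_mul, map_sum]
      refine Finset.sum_eq_zero fun S' _ => ?_
      rw [smul_mul_assoc, map_smul, smul_eq_mul, hdual, if_neg (hij' _ _ hlm), mul_zero]
    have e3 : τ ((C ν Q P * C l S T - ∑ S', r (C ν Q P) l S' S • C l S' T) * D m U V) = 0 :=
      hτL l m (fun h => hml (le_of_lt h)) U V (hC3 (C ν Q P) l S T)
    calc τ (C ν Q P * C l S T * D m U V)
        = τ (((∑ S', r (C ν Q P) l S' S • C l S' T) +
            (C ν Q P * C l S T - ∑ S', r (C ν Q P) l S' S • C l S' T)) * D m U V) := by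
          congr 2
          abel
      _ = 0 := by rw [add_mul, map_add, e2, e3, add_zero]
  have hO2 : ∀ (l m : Λ), ¬ m ≤ l → ∀ (S T : M l) (U V : M m), D m U V * C l S T = 0 := by
    intro l m hml S T U V
    refine eq_zero_of_repr_zero bD fun b => ?_
    obtain ⟨ν, P, Q⟩ := b
    rw [hreprD]
    have hlm : l ≠ m := fun h => hml (le_of_eq h.symm)
    have e1 : τ (C ν Q P * (D m U V * C l S T)) = τ ((C l S T * C ν Q P) * D m U V) := by
      rw [← mul_assoc, hτtr, ← mul_assoc]
    rw [e1]
    have e2 : τ ((∑ T', r (ι (C ν Q P)) l T' T • C l S T') * D m U V) = 0 := by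
      rw [Finset.sum_mul, map_sum]
      refine Finset.sum_eq_zero fun T' _ => ?_
      rw [smul_mul_assoc, map_smul, smul_eq_mul, hdual, if_neg (hij' _ _ hlm), mul_zero]
    have e3 : τ ((C l S T * C ν Q P - ∑ T', r (ι (C ν Q P)) l T' T • C l S T') * D m U V) = 0 :=
      hτL l m (fun h => hml (le_of_lt h)) U V (hRC l S T (C ν Q P))
    calc τ ((C l S T * C ν Q P) * D m U V)
        = τ (((∑ T', r (ι (C ν Q P)) l T' T • C l S T') +
            (C l S T * C ν Q P - ∑ T', r (ι (C ν Q P)) l T' T • C l S T')) * D m U V) := by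
          congr 2
          abel
      _ = 0 := by rw [add_mul, map_add, e2, e3, add_zero]
  -- same level, mismatched inner indices
  have hK1 : ∀ (l : Λ) (S T U V : M l), T ≠ U → C l S T * D l U V = 0 := by
    intro l S T U V hTU
    refine eq_zero_of_repr_zero bD fun b => ?_
    obtain ⟨ν, P, Q⟩ := b
    rw [hreprD, ← mul_assoc]
    have e2 : τ ((∑ S', r (C ν Q P) l S' S • C l S' T) * D l U V) = 0 := by
      rw [Finset.sum_mul, map_sum]
      refine Finset.sum_eq_zero fun S' _ => ?_
      rw [smul_mul_assoc, map_smul, smul_eq_mul, hdual, if_neg, mul_zero]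
      intro h
      exact hTU (And.right (Prod.mk.injEq .. ▸ ((hij l _ _).mp h)))
    have e3 : τ ((C ν Q P * C l S T - ∑ S', r (C ν Q P) l S' S • C l S' T) * D l U V) = 0 :=
      hτL l l (lt_irrefl l) U V (hC3 (C ν Q P) l S T)
    calc τ (C ν Q P * C l S T * D l U V)
        = τ (((∑ S', r (C ν Q P) l S' S • C l S' T) +
            (C ν Q P * C l S T - ∑ S', r (C ν Q P) l S' S • C l S' T)) * D l U V) := by
          congr 2
          abel
      _ = 0 := by rw [add_mul, map_add, e2, e3, add_zero]
  -- the lower C-span is a right ideal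
  have hLright : ∀ (ν : Λ) (a : A), ∀ {y : A}, y ∈ Submodule.span R (genSet C (· < ν)) →
      y * a ∈ Submodule.span R (genSet C (· < ν)) := by
    intro ν a y hy
    have hle : Submodule.span R (genSet C (· < ν)) ≤
        (Submodule.span R (genSet C (· < ν))).comap (LinearMap.mulRight R a) := by
      rw [Submodule.span_le]
      rintro g ⟨m, X, Y, hm, rfl⟩
      simp only [SetLike.mem_coe, Submodule.mem_comap, LinearMap.mulRight_apply]
      have heq : C m X Y * a = (C m X Y * a - ∑ T', r (ι a) m T' Y • C m X T') +
          ∑ T', r (ι a) m T' Y • C m X T' := by abel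
      rw [heq]
      refine Submodule.add_mem _
        (hmono C (· < m) (· < ν) (fun m' hm' => hm'.trans hm) (hRC m X Y a)) ?_
      exact Submodule.sum_mem _ fun T' _ =>
        Submodule.smul_mem _ _ (Submodule.subset_span ⟨m, X, T', hm, rfl⟩)
    exact hle hy
  -- scalar extraction
  have hscalarC : ∀ (l : Λ) (X Y : M l) (c : R),
      c • C l X Y ∈ Submodule.span R (genSet C (· < l)) → c = 0 := by
    intro l X Y c hc
    have h0 : bC.repr (c • C l X Y) ⟨l, (X, Y)⟩ = 0 := by
      rw [hreprC]
      exact hτL l l (lt_irrefl l) Y X hc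
    rw [map_smul, Finsupp.smul_apply, ← hbC, Module.Basis.repr_self_apply, if_pos rfl] at h0
    simpa using h0
  have hscalarD : ∀ (l : Λ) (X Y : M l) (c : R),
      c • D l X Y ∈ Submodule.span R (genSet D (l < ·)) → c = 0 := by
    intro l X Y c hc
    have h0 : bD.repr (c • D l X Y) ⟨l, (X, Y)⟩ = 0 := by
      rw [hreprD]
      exact hτH l l (lt_irrefl l) X Y hc
    rw [map_smul, Finsupp.smul_apply, ← hbD, Module.Basis.repr_self_apply, if_pos rfl] at h0
    simpa using h0
  have hreprCb : ∀ (l : Λ) (S T : M l) (b : (l : Λ) × (M l × M l)),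
      bC.repr (C l S T) b = if (⟨l, (S, T)⟩ : (l : Λ) × (M l × M l)) = b then 1 else 0 := by
    intro l S T b
    rw [← hbC l S T, Module.Basis.repr_self_apply]
  have hreprDb : ∀ (l : Λ) (S T : M l) (b : (l : Λ) × (M l × M l)),
      bD.repr (D l S T) b = if (⟨l, (S, T)⟩ : (l : Λ) × (M l × M l)) = b then 1 else 0 := by
    intro l S T b
    rw [← hbD l S T, Module.Basis.repr_self_apply]
  -- identification of structure constants with the Gram form Φ
  have hrC : ∀ (l : Λ) (S T X Y : M l),
      r (C l S T) l X Y = if X = S then Φ l T Y else 0 := by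
    intro l S T X Y
    have hmem : Φ l T Y • C l S T - ∑ X', r (C l S T) l X' Y • C l X' T ∈
        Submodule.span R (genSet C (· < l)) := by
      have h := Submodule.sub_mem _ (hC3 (C l S T) l Y T) (hΦ l S T Y T)
      have heq : Φ l T Y • C l S T - ∑ X', r (C l S T) l X' Y • C l X' T =
          (C l S T * C l Y T - ∑ X', r (C l S T) l X' Y • C l X' T) -
          (C l S T * C l Y T - Φ l T Y • C l S T) := by abel
      rw [heq]
      exact h
    have h0 : bC.repr (Φ l T Y • C l S T - ∑ X', r (C l S T) l X' Y • C l X' T) ⟨l, (X, T)⟩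
        = 0 := by
      rw [hreprC]
      exact hτL l l (lt_irrefl l) T X hmem
    rw [map_sub, Finsupp.sub_apply, map_smul, Finsupp.smul_apply, hreprCb,
      map_sum, Finsupp.finset_sum_apply] at h0
    have hsum : (∑ X', (bC.repr (r (C l S T) l X' Y • C l X' T)) ⟨l, (X, T)⟩) =
        r (C l S T) l X Y := by
      have : ∀ X', (bC.repr (r (C l S T) l X' Y • C l X' T)) ⟨l, (X, T)⟩ =
          r (C l S T) l X' Y * (if X' = X then 1 else 0) := by
        intro X'
        rw [map_smul, Finsupp.smul_apply, hreprCb, smul_eq_mul]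
        simp only [hij, Prod.mk.injEq, and_true]
      simp only [this, mul_ite, mul_one, mul_zero]
      simp
    rw [hsum] at h0
    have hcond : ((⟨l, (S, T)⟩ : (l : Λ) × (M l × M l)) = ⟨l, (X, T)⟩) ↔ (X = S) := by
      rw [hij]
      simp [Prod.ext_iff, eq_comm]
    rw [smul_eq_mul] at h0
    by_cases hXS : X = S
    · rw [if_pos (hcond.mpr hXS), mul_one] at h0
      rw [if_pos hXS]
      exact (sub_eq_zero.mp h0).symm
    · rw [if_neg (fun h => hXS (hcond.mp h)), mul_zero] at h0
      rw [zero_sub, neg_eq_zero] at h0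
      rw [if_neg hXS]
      exact h0
  -- identification of structure constants with the Gram form Ψ
  have hrD : ∀ (l : Λ) (U V X Y : M l),
      r (D l U V) l X Y = if Y = V then Ψ l X U else 0 := by
    intro l U V X Y
    have hmem : Ψ l X U • D l U V - ∑ Q, r (D l U V) l X Q • D l U Q ∈
        Submodule.span R (genSet D (l < ·)) := by
      have h := Submodule.sub_mem _ (hLemR l U X (D l U V)) (hΨ l U X U V)
      have heq : Ψ l X U • D l U V - ∑ Q, r (D l U V) l X Q • D l U Q =
          (D l U X * D l U V - ∑ Q, r (D l U V) l X Q • D l U Q) -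
          (D l U X * D l U V - Ψ l X U • D l U V) := by abel
      rw [heq]
      exact h
    have h0 : bD.repr (Ψ l X U • D l U V - ∑ Q, r (D l U V) l X Q • D l U Q) ⟨l, (U, Y)⟩
        = 0 := by
      rw [hreprD]
      exact hτH l l (lt_irrefl l) U Y hmem
    rw [map_sub, Finsupp.sub_apply, map_smul, Finsupp.smul_apply, hreprDb,
      map_sum, Finsupp.finset_sum_apply] at h0
    have hsum : (∑ Q, (bD.repr (r (D l U V) l X Q • D l U Q)) ⟨l, (U, Y)⟩) =
        r (D l U V) l X Y := by
      have : ∀ Q, (bD.repr (r (D l U V) l X Q • D l U Q)) ⟨l, (U, Y)⟩ =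
          r (D l U V) l X Q * (if Q = Y then 1 else 0) := by
        intro Q
        rw [map_smul, Finsupp.smul_apply, hreprDb, smul_eq_mul]
        simp only [hij, Prod.mk.injEq, true_and]
      simp only [this, mul_ite, mul_one, mul_zero]
      simp
    rw [hsum] at h0
    have hcond : ((⟨l, (U, V)⟩ : (l : Λ) × (M l × M l)) = ⟨l, (U, Y)⟩) ↔ (Y = V) := by
      rw [hij]
      simp [Prod.ext_iff, eq_comm]
    rw [smul_eq_mul] at h0
    by_cases hYV : Y = V
    · rw [if_pos (hcond.mpr hYV), mul_one] at h0
      rw [if_pos hYV]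
      exact (sub_eq_zero.mp h0).symm
    · rw [if_neg (fun h => hYV (hcond.mp h)), mul_zero] at h0
      rw [zero_sub, neg_eq_zero] at h0
      rw [if_neg hYV]
      exact h0
  -- symmetry of the Gram form Φ
  have hΦsymm : ∀ (l : Λ) (T U : M l), Φ l T U = Φ l U T := by
    intro l T U
    have key : ∀ (S V : M l), C l V U * C l T S - Φ l T U • C l V S ∈
        Submodule.span R (genSet C (· < l)) := by
      intro S V
      have hz := hιLower l (hΦ l S T U V)
      have hexp : C l V U * C l T S - Φ l T U • C l V S =
          ι (C l S T * C l U V - Φ l T U • C l S V)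
          - (ι (C l U V) - C l V U) * ι (C l S T)
          - C l V U * (ι (C l S T) - C l T S)
          + Φ l T U • (ι (C l S V) - C l V S) := by
        rw [map_sub, map_smul, hιmul, sub_mul, mul_sub, smul_sub]
        abel
      rw [hexp]
      refine Submodule.add_mem _ (Submodule.sub_mem _ (Submodule.sub_mem _ hz
        (hLright l (ι (C l S T)) (hC2 l U V))) (hLleft l (C l V U) (hC2 l S T)))
        (Submodule.smul_mem _ _ (hC2 l S V))
    have hdiff : (Φ l U T - Φ l T U) • C l T U ∈ Submodule.span R (genSet C (· < l)) := by
      have h1 := key U T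
      have h2 := hΦ l T U T U
      have heq : (Φ l U T - Φ l T U) • C l T U =
          (C l T U * C l T U - Φ l T U • C l T U) -
          (C l T U * C l T U - Φ l U T • C l T U) := by
        rw [sub_smul]
        abel
      rw [heq]
      exact Submodule.sub_mem _ h1 h2
    exact ((sub_eq_zero.mp (hscalarC l T U _ hdiff))).symm
  -- C times high D-span vanishes
  have hCH : ∀ (t ν : Λ), (∀ m, ν < m → ¬ m ≤ t) → ∀ (S T : M t), ∀ {h : A},
      h ∈ Submodule.span R (genSet D (ν < ·)) → C t S T * h = 0 := by
    intro t ν hcond S T h hh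
    refine mul_span_zero ?_ hh
    rintro g ⟨m, X, Y, hm, rfl⟩
    exact hO1 t m (hcond m hm) S T X Y
  -- high D-span times C vanishes
  have hHC : ∀ (t ν : Λ), (∀ m, ν < m → ¬ m ≤ t) → ∀ (S T : M t), ∀ {h : A},
      h ∈ Submodule.span R (genSet D (ν < ·)) → h * C t S T = 0 := by
    intro t ν hcond S T h hh
    refine span_mul_zero ?_ hh
    rintro g ⟨m, X, Y, hm, rfl⟩
    exact hO2 t m (hcond m hm) S T X Y
  -- the high D-span is a right ideal
  have hHright : ∀ (ν : Λ) (a : A), ∀ {h : A}, h ∈ Submodule.span R (genSet D (ν < ·)) →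
      h * a ∈ Submodule.span R (genSet D (ν < ·)) := by
    intro ν a h hh
    have hle : Submodule.span R (genSet D (ν < ·)) ≤
        (Submodule.span R (genSet D (ν < ·))).comap (LinearMap.mulRight R a) := by
      rw [Submodule.span_le]
      rintro g ⟨m, X, Y, hm, rfl⟩
      simp only [SetLike.mem_coe, Submodule.mem_comap, LinearMap.mulRight_apply]
      have heq : D m X Y * a = (D m X Y * a - ∑ Q, r a m Y Q • D m X Q) +
          ∑ Q, r a m Y Q • D m X Q := by abel
      rw [heq]
      refine Submodule.add_mem _
        (hmono D (m < ·) (ν < ·) (fun m' hm' => hm.trans hm') (hLemR m X Y a)) ?_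
      exact Submodule.sum_mem _ fun Q _ =>
        Submodule.smul_mem _ _ (Submodule.subset_span ⟨m, X, Q, hm, rfl⟩)
    exact hle hh
  -- K2': same-level D*C product
  have hK2' : ∀ (l : Λ) (U V S T : M l),
      D l U V * C l S T - ∑ Q, (if V = S then Φ l T Q else 0) • D l U Q ∈
        Submodule.span R (genSet D (l < ·)) := by
    intro l U V S T
    have h := hLemR l U V (C l S T)
    have heq : ∑ Q, r (C l S T) l V Q • D l U Q =
        ∑ Q, (if V = S then Φ l T Q else 0) • D l U Q := by
      refine Finset.sum_congr rfl fun Q _ => ?_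
      rw [hrC l S T V Q]
    rwa [heq] at h
  -- absorption lemmas
  have hEabs : ∀ (l : Λ) (S T U : M l) (a : A),
      (C l S T * D l T U) * a = ∑ Q, r a l U Q • (C l S T * D l T Q) := by
    intro l S T U a
    have hcond : ∀ m, l < m → ¬ m ≤ l := fun m hm hle => lt_irrefl l (lt_of_lt_of_le hm hle)
    have hw := hLemR l T U a
    have hsplit : D l T U * a = (∑ Q, r a l U Q • D l T Q) +
        (D l T U * a - ∑ Q, r a l U Q • D l T Q) := by abel
    rw [mul_assoc, hsplit, mul_add, hCH l l hcond S T hw, add_zero, Finset.mul_sum]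
    refine Finset.sum_congr rfl fun Q _ => ?_
    rw [mul_smul_comm]
  have hFabs : ∀ (l : Λ) (U V S : M l) (a : A),
      a * (D l U V * C l V S) = ∑ P, r (ι a) l U P • (D l P V * C l V S) := by
    intro l U V S a
    have hcond : ∀ m, l < m → ¬ m ≤ l := fun m hm hle => lt_irrefl l (lt_of_lt_of_le hm hle)
    have hw := hLemLD l U V a
    have hsplit : a * D l U V = (∑ P, r (ι a) l U P • D l P V) +
        (a * D l U V - ∑ P, r (ι a) l U P • D l P V) := by abel
    rw [← mul_assoc, hsplit, add_mul, hHC l l hcond V S hw, add_zero, Finset.sum_mul]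
    refine Finset.sum_congr rfl fun P _ => ?_
    rw [smul_mul_assoc]
  have hIabs1 : ∀ (l : Λ) (S V U : M l) (a : A),
      a * (C l S V * D l V U) = ∑ S', r a l S' S • (C l S' V * D l V U) := by
    intro l S V U a
    have hw := hC3 a l S V
    have hsplit : a * C l S V = (∑ S', r a l S' S • C l S' V) +
        (a * C l S V - ∑ S', r a l S' S • C l S' V) := by abel
    have hz : (a * C l S V - ∑ S', r a l S' S • C l S' V) * D l V U = 0 := by
      refine span_mul_zero ?_ hw
      rintro g ⟨m, X, Y, hm, rfl⟩
      exact hO1 m l (fun hle => lt_irrefl l (lt_of_le_of_lt hle hm)) X Y V U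
    rw [← mul_assoc, hsplit, add_mul, hz, add_zero, Finset.sum_mul]
    refine Finset.sum_congr rfl fun S' _ => ?_
    rw [smul_mul_assoc]
  -- core computation: E-type generators annihilate each other at the same level
  have hCDE : ∀ (l : Λ), k l = 0 → ∀ (S T Q P V W : M l),
      (C l S T * D l T Q) * (C l P V * D l V W) = 0 := by
    intro l hkl S T Q P V W
    have hcond : ∀ m, l < m → ¬ m ≤ l := fun m hm hle => lt_irrefl l (lt_of_lt_of_le hm hle)
    have hw := hK2' l T Q P V
    have hassoc : (C l S T * D l T Q) * (C l P V * D l V W) =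
        C l S T * ((D l T Q * C l P V) * D l V W) := by
      rw [mul_assoc, ← mul_assoc (D l T Q)]
    rw [hassoc, show D l T Q * C l P V = (∑ X, (if Q = P then Φ l V X else 0) • D l T X) +
        (D l T Q * C l P V - ∑ X, (if Q = P then Φ l V X else 0) • D l T X) from by abel,
      add_mul, mul_add, hCH l l hcond S T (hHright l (D l V W) hw), add_zero,
      Finset.sum_mul, Finset.mul_sum]
    have h3 : ∀ X : M l, C l S T * ((if Q = P then Φ l V X else 0) • D l T X * D l V W) =
        ((if Q = P then Φ l V X else 0) * Ψ l X V) • (C l S T * D l T W) := by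
      intro X
      rw [smul_mul_assoc, mul_smul_comm]
      have hsplit : D l T X * D l V W = Ψ l X V • D l T W +
          (D l T X * D l V W - Ψ l X V • D l T W) := by abel
      rw [hsplit, mul_add, hCH l l hcond S T (hΨ l T X V W), add_zero, mul_smul_comm,
        smul_smul]
    rw [Finset.sum_congr rfl fun X _ => h3 X, ← Finset.sum_smul]
    have h4 : ∑ X, (if Q = P then Φ l V X else 0) * Ψ l X V = 0 := by
      by_cases hQP : Q = P
      · simp only [if_pos hQP]
        have he : ∀ X : M l, Φ l V X * Ψ l X V = Φ l X V * Ψ l X V := fun X => by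
          rw [hΦsymm]
        rw [Finset.sum_congr rfl fun X _ => he X, hk l V, hkl]
      · simp [hQP]
    rw [h4, zero_smul]
  -- core computation: F-type generators annihilate each other at the same level
  have hFDF : ∀ (l : Λ), k l = 0 → ∀ (U V S W Q P' : M l),
      (D l U V * C l V S) * (D l P' W * C l W Q) = 0 := by
    intro l hkl U V S W Q P'
    have hcond : ∀ m, l < m → ¬ m ≤ l := fun m hm hle => lt_irrefl l (lt_of_lt_of_le hm hle)
    by_cases hSP : S = P'
    · subst hSP
      have hw := hK2' l U V V S
      rw [show D l U V * C l V S = (∑ X, (if V = V then Φ l S X else 0) • D l U X) +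
          (D l U V * C l V S - ∑ X, (if V = V then Φ l S X else 0) • D l U X) from by abel,
        add_mul]
      have h2 : (D l U V * C l V S - ∑ X, (if V = V then Φ l S X else 0) • D l U X) *
          (D l S W * C l W Q) = 0 := by
        rw [← mul_assoc]
        exact hHC l l hcond W Q (hHright l (D l S W) hw)
      rw [h2, add_zero, Finset.sum_mul]
      have h3 : ∀ X : M l, ((if V = V then Φ l S X else 0) • D l U X) *
          (D l S W * C l W Q) = (Φ l S X * Ψ l X S) • (D l U W * C l W Q) := by
        intro X
        rw [if_pos rfl, smul_mul_assoc, ← mul_assoc]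
        have hsplit : D l U X * D l S W = Ψ l X S • D l U W +
            (D l U X * D l S W - Ψ l X S • D l U W) := by abel
        rw [hsplit, add_mul, hHC l l hcond W Q (hΨ l U X S W), add_zero, smul_mul_assoc,
          smul_smul]
      rw [Finset.sum_congr rfl fun X _ => h3 X, ← Finset.sum_smul]
      have h4 : ∑ X, Φ l S X * Ψ l X S = 0 := by
        have he : ∀ X : M l, Φ l S X * Ψ l X S = Φ l X S * Ψ l X S := fun X => by
          rw [hΦsymm]
        rw [Finset.sum_congr rfl fun X _ => he X, hk l S, hkl]
      rw [h4, zero_smul]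
    · have hz : C l V S * D l P' W = 0 := hK1 l V S P' W hSP
      rw [mul_assoc, ← mul_assoc (C l V S), hz, zero_mul, mul_zero]
  -- Main Lemma 1 : E-type generators annihilate across any middle element
  have hEaE : ∀ (lam mu : Λ), k lam = 0 → ∀ (S T U : M lam) (P V W : M mu) (a : A),
      (C lam S T * D lam T U) * a * (C mu P V * D mu V W) = 0 := by
    intro lam mu hkl S T U P V W a
    by_cases heq : lam = mu
    · subst heq
      rw [hEabs lam S T U a, Finset.sum_mul]
      refine Finset.sum_eq_zero fun Q _ => ?_
      rw [smul_mul_assoc, hCDE lam hkl S T Q P V W, smul_zero]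
    · by_cases hle : lam ≤ mu
      · have hlt : lam < mu := lt_of_le_of_ne hle heq
        have hassoc : (C lam S T * D lam T U) * a * (C mu P V * D mu V W) =
            ((C lam S T * D lam T U) * (a * C mu P V)) * D mu V W := by
          rw [mul_assoc, ← mul_assoc a, ← mul_assoc]
        rw [hassoc, hEabs lam S T U (a * C mu P V), Finset.sum_mul]
        refine Finset.sum_eq_zero fun Q _ => ?_
        rw [smul_mul_assoc, mul_assoc]
        have hw := hLemLD mu V W (D lam T Q)
        have hsplit : D lam T Q * D mu V W =
            (∑ P', r (ι (D lam T Q)) mu V P' • D mu P' W) +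
            (D lam T Q * D mu V W - ∑ P', r (ι (D lam T Q)) mu V P' • D mu P' W) := by abel
        rw [hsplit, mul_add,
          hCH lam mu (fun m hm hle2 => absurd (lt_trans hlt hm) (not_lt_of_ge hle2)) S T hw,
          add_zero, Finset.mul_sum]
        rw [Finset.sum_eq_zero fun P' _ => by
          rw [mul_smul_comm, hO1 lam mu (fun h => lt_irrefl lam (lt_of_lt_of_le hlt h)) S T P' W,
            smul_zero], smul_zero]
      · rw [hEabs lam S T U a, Finset.sum_mul]
        refine Finset.sum_eq_zero fun Q _ => ?_
        rw [smul_mul_assoc]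
        have hassoc2 : (C lam S T * D lam T Q) * (C mu P V * D mu V W) =
            C lam S T * ((D lam T Q * C mu P V) * D mu V W) := by
          rw [mul_assoc, ← mul_assoc (D lam T Q)]
        rw [hassoc2, hO2 mu lam hle P V T Q, zero_mul, mul_zero, smul_zero]
  -- Main Lemma 2 : F-type generators annihilate across any middle element
  have hFaF : ∀ (lam mu : Λ), k mu = 0 → ∀ (U V S : M lam) (P W Q : M mu) (a : A),
      (D lam U V * C lam V S) * a * (D mu P W * C mu W Q) = 0 := by
    intro lam mu hkmu U V S P W Q a
    by_cases heq : lam = mu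
    · subst heq
      rw [mul_assoc, hFabs lam P W Q a, Finset.mul_sum]
      refine Finset.sum_eq_zero fun P' _ => ?_
      rw [mul_smul_comm, hFDF lam hkmu U V S W Q P', smul_zero]
    · by_cases hle : lam ≤ mu
      · have hlt : lam < mu := lt_of_le_of_ne hle heq
        have hz : C lam V S * (a * D mu P W) = 0 := by
          have hw := hLemLD mu P W a
          rw [show a * D mu P W = (∑ P', r (ι a) mu P P' • D mu P' W) +
              (a * D mu P W - ∑ P', r (ι a) mu P P' • D mu P' W) from by abel, mul_add,
            hCH lam mu (fun m hm hle2 => absurd (lt_trans hlt hm) (not_lt_of_ge hle2)) V S hw,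
            add_zero, Finset.mul_sum]
          refine Finset.sum_eq_zero fun P' _ => ?_
          rw [mul_smul_comm, hO1 lam mu (fun h => lt_irrefl lam (lt_of_lt_of_le hlt h)) V S P' W,
            smul_zero]
        have hassoc : (D lam U V * C lam V S) * a * (D mu P W * C mu W Q) =
            (D lam U V * (C lam V S * (a * D mu P W))) * C mu W Q := by
          rw [← mul_assoc ((D lam U V * C lam V S) * a) (D mu P W) (C mu W Q),
            mul_assoc (D lam U V * C lam V S) a (D mu P W),
            mul_assoc (D lam U V) (C lam V S) (a * D mu P W)]
        rw [hassoc, hz, mul_zero, zero_mul]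
      · have hassoc : (D lam U V * C lam V S) * a * (D mu P W * C mu W Q) =
            (D lam U V * (C lam V S * a * D mu P W)) * C mu W Q := by
          rw [← mul_assoc ((D lam U V * C lam V S) * a) (D mu P W) (C mu W Q),
            mul_assoc (D lam U V) (C lam V S) a,
            mul_assoc (D lam U V) (C lam V S * a) (D mu P W)]
        rw [hassoc]
        have hw := hLemR lam U V (C lam V S * a * D mu P W)
        rw [show D lam U V * (C lam V S * a * D mu P W) =
            (∑ Q', r (C lam V S * a * D mu P W) lam V Q' • D lam U Q') +
            (D lam U V * (C lam V S * a * D mu P W) -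
              ∑ Q', r (C lam V S * a * D mu P W) lam V Q' • D lam U Q') from by abel, add_mul,
          hHC mu lam (fun m hm hle2 => hle (le_of_lt (lt_of_lt_of_le hm hle2))) W Q hw,
          add_zero, Finset.sum_mul]
        refine Finset.sum_eq_zero fun Q' _ => ?_
        rw [smul_mul_assoc, hO2 mu lam hle W Q U Q', smul_zero]
  -- the two generating sets
  intro I hI
  have hIE_eq : (⨆ l ∈ {l : Λ | k l = 0},
      Submodule.span R {x : A | ∃ S U V : M l, x = C l S V * D l V U}) =
      Submodule.span R {x : A | ∃ l, k l = 0 ∧ ∃ S U V : M l, x = C l S V * D l V U} := by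
    apply le_antisymm
    · refine iSup₂_le fun l hl => Submodule.span_mono ?_
      rintro x ⟨S, U, V, rfl⟩
      exact ⟨l, hl, S, U, V, rfl⟩
    · rw [Submodule.span_le]
      rintro x ⟨l, hl, S, U, V, rfl⟩
      exact (le_iSup₂ (f := fun (l : Λ) (_ : l ∈ {l : Λ | k l = 0}) =>
        Submodule.span R {x : A | ∃ S U V : M l, x = C l S V * D l V U}) l hl)
        (Submodule.subset_span ⟨S, U, V, rfl⟩)
  have hIF_eq : (⨆ l ∈ {l : Λ | k l = 0},
      Submodule.span R {x : A | ∃ S U V : M l, x = D l U V * C l V S}) =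
      Submodule.span R {x : A | ∃ l, k l = 0 ∧ ∃ S U V : M l, x = D l U V * C l V S} := by
    apply le_antisymm
    · refine iSup₂_le fun l hl => Submodule.span_mono ?_
      rintro x ⟨S, U, V, rfl⟩
      exact ⟨l, hl, S, U, V, rfl⟩
    · rw [Submodule.span_le]
      rintro x ⟨l, hl, S, U, V, rfl⟩
      exact (le_iSup₂ (f := fun (l : Λ) (_ : l ∈ {l : Λ | k l = 0}) =>
        Submodule.span R {x : A | ∃ S U V : M l, x = D l U V * C l V S}) l hl)
        (Submodule.subset_span ⟨S, U, V, rfl⟩)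
  rw [hIE_eq, hIF_eq] at hI
  -- triple product annihilation over the spans
  have hEE : ∀ u ∈ Submodule.span R {x : A | ∃ l, k l = 0 ∧ ∃ S U V : M l,
      x = C l S V * D l V U}, ∀ (a : A),
      ∀ v ∈ Submodule.span R {x : A | ∃ l, k l = 0 ∧ ∃ S U V : M l, x = C l S V * D l V U},
      u * a * v = 0 := by
    intro u hu a v hv
    have h1 : ∀ g ∈ {x : A | ∃ l, k l = 0 ∧ ∃ S U V : M l, x = C l S V * D l V U},
        g * (a * v) = 0 := by
      rintro g ⟨l, hl, S, U, V, rfl⟩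
      have h2 := mul_span_zero (c := (C l S V * D l V U) * a) ?_ hv
      · rw [← mul_assoc]
        exact h2
      · rintro g2 ⟨m, hm, P, W, X, rfl⟩
        exact hEaE l m hl S V U P X W a
    have h3 := span_mul_zero (c := a * v) h1 hu
    rw [← mul_assoc] at h3
    exact h3
  have hFF : ∀ u ∈ Submodule.span R {x : A | ∃ l, k l = 0 ∧ ∃ S U V : M l,
      x = D l U V * C l V S}, ∀ (a : A),
      ∀ v ∈ Submodule.span R {x : A | ∃ l, k l = 0 ∧ ∃ S U V : M l, x = D l U V * C l V S},
      u * a * v = 0 := by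
    intro u hu a v hv
    have h1 : ∀ g ∈ {x : A | ∃ l, k l = 0 ∧ ∃ S U V : M l, x = D l U V * C l V S},
        g * (a * v) = 0 := by
      rintro g ⟨l, hl, S, U, V, rfl⟩
      have h2 := mul_span_zero (c := (D l U V * C l V S) * a) ?_ hv
      · rw [← mul_assoc]
        exact h2
      · rintro g2 ⟨m, hm, P, W, X, rfl⟩
        exact hFaF l m hm U V S W X P a
    have h3 := span_mul_zero (c := a * v) h1 hu
    rw [← mul_assoc] at h3
    exact h3
  have hpart1 : ∀ x ∈ I, ∀ y ∈ I, ∀ z ∈ I, x * y * z = 0 := by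
    intro x hx y hy z hz
    rw [hI, Submodule.add_eq_sup] at hx hy hz
    obtain ⟨xE, hxE, xF, hxF, rfl⟩ := Submodule.mem_sup.mp hx
    obtain ⟨yE, hyE, yF, hyF, rfl⟩ := Submodule.mem_sup.mp hy
    obtain ⟨zE, hzE, zF, hzF, rfl⟩ := Submodule.mem_sup.mp hz
    have e1 : xE * yE = 0 := by have := hEE xE hxE 1 yE hyE; rwa [mul_one] at this
    have e2 : yE * zE = 0 := by have := hEE yE hyE 1 zE hzE; rwa [mul_one] at this
    have e3 : xF * yF = 0 := by have := hFF xF hxF 1 yF hyF; rwa [mul_one] at this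
    have e4 : yF * zF = 0 := by have := hFF yF hyF 1 zF hzF; rwa [mul_one] at this
    have h12 : (xE + xF) * (yE + yF) = xE * yF + xF * yE := by
      rw [mul_add, add_mul, add_mul, e1, e3, zero_add, add_zero]
      abel
    rw [h12, add_mul, mul_add, mul_add, hEE xE hxE yF zE hzE, hFF xF hxF yE zF hzF,
      mul_assoc xE yF zF, e4, mul_zero, mul_assoc xF yE zE, e2, mul_zero]
    simp
  refine ⟨hpart1, ?_⟩
  -- I is a left ideal
  have hideal : ∀ (c : A), ∀ x ∈ I, c * x ∈ I := by
    intro c x hx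
    rw [hI, Submodule.add_eq_sup] at hx ⊢
    obtain ⟨xE, hxE, xF, hxF, rfl⟩ := Submodule.mem_sup.mp hx
    rw [mul_add]
    refine Submodule.add_mem _ (Submodule.mem_sup_left ?_) (Submodule.mem_sup_right ?_)
    · have hle : Submodule.span R {x : A | ∃ l, k l = 0 ∧ ∃ S U V : M l,
          x = C l S V * D l V U} ≤
          (Submodule.span R {x : A | ∃ l, k l = 0 ∧ ∃ S U V : M l,
            x = C l S V * D l V U}).comap (LinearMap.mulLeft R c) := by
        rw [Submodule.span_le]
        rintro g ⟨l, hl, S, U, V, rfl⟩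
        simp only [SetLike.mem_coe, Submodule.mem_comap, LinearMap.mulLeft_apply]
        rw [hIabs1 l S V U c]
        exact Submodule.sum_mem _ fun S' _ => Submodule.smul_mem _ _
          (Submodule.subset_span ⟨l, hl, S', U, V, rfl⟩)
      exact hle hxE
    · have hle : Submodule.span R {x : A | ∃ l, k l = 0 ∧ ∃ S U V : M l,
          x = D l U V * C l V S} ≤
          (Submodule.span R {x : A | ∃ l, k l = 0 ∧ ∃ S U V : M l,
            x = D l U V * C l V S}).comap (LinearMap.mulLeft R c) := by
        rw [Submodule.span_le]
        rintro g ⟨l, hl, S, U, V, rfl⟩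
        simp only [SetLike.mem_coe, Submodule.mem_comap, LinearMap.mulLeft_apply]
        rw [hFabs l U V S c]
        exact Submodule.sum_mem _ fun P _ => Submodule.smul_mem _ _
          (Submodule.subset_span ⟨l, hl, S, P, V, rfl⟩)
      exact hle hxF
  intro x hx
  rw [Ideal.mem_jacobson_iff]
  intro y
  refine ⟨1 - y * x + (y * x) * (y * x), ?_⟩
  have hw : y * x ∈ I := hideal y x hx
  have hw3 : (y * x) * (y * x) * (y * x) = 0 := hpart1 _ hw _ hw _ hw
  rw [Ideal.mem_bot, mul_assoc]
  have hident : (1 - y * x + (y * x) * (y * x)) * (y * x) +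
      (1 - y * x + (y * x) * (y * x)) - 1 = (y * x) * (y * x) * (y * x) := by
    noncomm_ring
  rw [hident, hw3]
end
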